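/- arXiv:2201.08596 — 2 statements merged into one kernel-verified Lean document; each statement's English description precedes it below -/
import Mathlib

section
/- If G is a connected signed digraph with a negative cycle, then there exists a degree-bounded finite dynamical system on G without any fixed point. -/
open scoped Classical

/-- A signed digraph on vertex set `V`: for each ordered pair of vertices there may be
a positive arc and/or a negative arc. -/
structure SDigraph (V : Type) where
  pos : V → V → Bool
  neg : V → V → Bool

namespace SDigraph

variable {V : Type}

/-- There is an arc (of some sign) from `a` to `b` (the underlying unsigned digraph). -/
def arc (G : SDigraph V) (a b : V) : Prop := G.pos a b = true ∨ G.neg a b = true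

/-- Out-degree: positive and negative arcs are counted separately. -/
def outdeg [Fintype V] (G : SDigraph V) (i : V) : ℕ :=
  (Finset.univ.filter fun j => G.pos i j = true).card +
  (Finset.univ.filter fun j => G.neg i j = true).card

/-- In-degree: positive and negative arcs are counted separately. -/
def indeg [Fintype V] (G : SDigraph V) (i : V) : ℕ :=
  (Finset.univ.filter fun j => G.pos j i = true).card +
  (Finset.univ.filter fun j => G.neg j i = true).card

/-- The symmetrized adjacency relation (for weak connectivity). -/
def wconnRel (G : SDigraph V) (a b : V) : Prop := G.arc a b ∨ G.arc b a

/-- `G` is (weakly) connected. -/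
def Connected (G : SDigraph V) : Prop :=
  ∀ a b : V, Relation.ReflTransGen (wconnRel G) a b

/-- Directed reachability. -/
def Reach (G : SDigraph V) : V → V → Prop := Relation.ReflTransGen G.arc

/-- Out-degree in the underlying unsigned digraph. -/
noncomputable def underOutdeg [Fintype V] (G : SDigraph V) (i : V) : ℕ :=
  (Finset.univ.filter fun j => G.arc i j).card

/-- In-degree in the underlying unsigned digraph. -/
noncomputable def underIndeg [Fintype V] (G : SDigraph V) (i : V) : ℕ :=
  (Finset.univ.filter fun j => G.arc j i).card

/-- `G` is a signed cycle: the underlying digraph is a directed cycle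
(every vertex has exactly one out- and one in-neighbour and the graph is connected
and nonempty) and there are no parallel arcs. -/
def IsSignedCycleGraph [Fintype V] (G : SDigraph V) : Prop :=
  0 < Fintype.card V ∧ Connected G ∧
  (∀ a b : V, ¬(G.pos a b = true ∧ G.neg a b = true)) ∧
  (∀ i : V, underOutdeg G i = 1) ∧
  (∀ i : V, underIndeg G i = 1)

/-- `steps G m a b`: there is a directed walk of length `m` from `a` to `b`. -/
def steps (G : SDigraph V) : ℕ → V → V → Prop
  | 0 => fun a b => a = b
  | m + 1 => fun a b => ∃ c, G.arc a c ∧ steps G m c b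

/-- Directed distance from `a` to `b`, `⊤` if `b` is not reachable from `a`. -/
noncomputable def dist (G : SDigraph V) (a b : V) : ℕ∞ :=
  sInf {x : ℕ∞ | ∃ m : ℕ, steps G m a b ∧ x = (m : ℕ∞)}

/-- The strong component containing `a`, as a finite set of vertices. -/
noncomputable def scc [Fintype V] (G : SDigraph V) (a : V) : Finset V :=
  Finset.univ.filter fun b => Reach G a b ∧ Reach G b a

/-- The strong component of `a` is initial: no arc enters it from outside. -/
def Initial [Fintype V] (G : SDigraph V) (a : V) : Prop :=
  ∀ b c : V, b ∈ scc G a → G.arc c b → c ∈ scc G a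

/-- `λ(G) = max_i min_{initial strong component I} (d_G(I,i) + |I|)`. -/
noncomputable def lam [Fintype V] (G : SDigraph V) : ℕ∞ :=
  Finset.univ.sup fun i : V =>
    (Finset.univ.filter fun a : V => Initial G a).inf fun a =>
      (scc G a).inf (fun b => dist G b i) + ((scc G a).card : ℕ∞)

/-- `G` is basic: all its initial strong components are trivial
(a single vertex with no loop). -/
def Basic [Fintype V] (G : SDigraph V) : Prop :=
  ∀ a : V, Initial G a → (scc G a).card = 1 ∧ ¬ G.arc a a

/-- The (weakly) connected component containing `a`. -/
noncomputable def component [Fintype V] (G : SDigraph V) (a : V) : Finset V :=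
  Finset.univ.filter fun b => Relation.ReflTransGen (wconnRel G) a b

/-- The subgraph induced by a set `S` of vertices. -/
def induce (G : SDigraph V) (S : Finset V) : SDigraph {x : V // x ∈ S} :=
  ⟨fun a b => G.pos a.1 b.1, fun a b => G.neg a.1 b.1⟩

/-- `v` (with arc signs `s`) is a directed cycle of `G` on `m+1` distinct vertices:
for each `t` there is an arc of sign `s t` from `v t` to `v (t+1)` (cyclically). -/
def IsSignedCycleOn (G : SDigraph V) (m : ℕ)
    (v : Fin (m + 1) → V) (s : Fin (m + 1) → Bool) : Prop :=
  Function.Injective v ∧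
  ∀ t : Fin (m + 1),
    if s t then G.pos (v t) (v (t + 1)) = true else G.neg (v t) (v (t + 1)) = true

/-- `G` has a directed cycle (signs ignored). -/
def HasCycle (G : SDigraph V) : Prop :=
  ∃ (m : ℕ) (v : Fin (m + 1) → V), Function.Injective v ∧
    ∀ t : Fin (m + 1), G.arc (v t) (v (t + 1))

/-- Number of negative arcs in a sign pattern. -/
def negCount {m : ℕ} (s : Fin (m + 1) → Bool) : ℕ :=
  (Finset.univ.filter fun t => s t = false).card

/-- `G` has a positive cycle. -/
def HasPositiveCycle (G : SDigraph V) : Prop :=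
  ∃ (m : ℕ) (v : Fin (m + 1) → V) (s : Fin (m + 1) → Bool),
    IsSignedCycleOn G m v s ∧ negCount s % 2 = 0

/-- `G` has a negative cycle. -/
def HasNegativeCycle (G : SDigraph V) : Prop :=
  ∃ (m : ℕ) (v : Fin (m + 1) → V) (s : Fin (m + 1) → Bool),
    IsSignedCycleOn G m v s ∧ negCount s % 2 = 1

end SDigraph

/-- A finite dynamical system with components indexed by `V`: each `X i` is a
nonempty finite interval of integers and `f` maps `X = ∏ X i` into itself. -/
structure FDS (V : Type) where
  X : V → Finset ℤ
  nonempty : ∀ i, (X i).Nonempty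
  interval : ∀ i, ∀ a ∈ X i, ∀ b ∈ X i, ∀ c : ℤ, a ≤ c → c ≤ b → c ∈ X i
  f : (V → ℤ) → V → ℤ
  maps : ∀ x, (∀ i, x i ∈ X i) → ∀ i, f x i ∈ X i

namespace FDS

variable {V : Type}

/-- `x` is a state of the system, i.e. `x ∈ X`. -/
def mem (F : FDS V) (x : V → ℤ) : Prop := ∀ i, x i ∈ F.X i

/-- `G` is the interaction graph of `F`: there is a positive (negative) arc from
`j` to `i` iff increasing `x j` by one can strictly increase (decrease) `f _ i`. -/
def onGraph [DecidableEq V] (F : FDS V) (G : SDigraph V) : Prop :=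
  (∀ j i, G.pos j i = true ↔ ∃ x, F.mem x ∧ x j + 1 ∈ F.X j ∧
      F.f x i < F.f (Function.update x j (x j + 1)) i) ∧
  (∀ j i, G.neg j i = true ↔ ∃ x, F.mem x ∧ x j + 1 ∈ F.X j ∧
      F.f (Function.update x j (x j + 1)) i < F.f x i)

/-- `F` is degree-bounded with respect to `G`. -/
def degreeBounded [Fintype V] (F : FDS V) (G : SDigraph V) : Prop :=
  ∀ i, (G.outdeg i = 0 ∧ 0 < G.indeg i → (F.X i).card = 2) ∧
    (¬(G.outdeg i = 0 ∧ 0 < G.indeg i) → (F.X i).card ≤ G.outdeg i + 1)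

/-- Fixed points of `F`. -/
def IsFixed (F : FDS V) (x : V → ℤ) : Prop := F.mem x ∧ F.f x = x

/-- `F` is nilpotent: some iterate is constant on `X`. -/
def Nilpotent (F : FDS V) : Prop :=
  ∃ k : ℕ, 1 ≤ k ∧ ∃ c, ∀ x, F.mem x → F.f^[k] x = c

/-- `F` converges toward `H` in `k` steps:
`f^k(X) ⊆ h(Y) ⊆ Y ⊆ X` and `f = h` on `Y`. -/
def ConvergesToward (F H : FDS V) (k : ℕ) : Prop :=
  (∀ i, H.X i ⊆ F.X i) ∧
  (∀ x, F.mem x → ∃ y, H.mem y ∧ F.f^[k] x = H.f y) ∧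
  (∀ x, H.mem x → F.f x = H.f x)

end FDS

namespace Stmt3

open Finset

variable {n : ℕ}

/-- There is an arc from `j` to `k` with sign `σ` (`true` = positive). -/
def arcB (G : SDigraph (Fin n)) (j k : Fin n) (σ : Bool) : Prop :=
  if σ then G.pos j k = true else G.neg j k = true

/-- The set of signed out-arcs of `j`, as pairs (target, sign). -/
noncomputable def OutS (G : SDigraph (Fin n)) (j : Fin n) : Finset (Fin n × Bool) :=
  univ.filter fun a => arcB G j a.1 a.2

/-- The set of signed in-arcs of `k`, as pairs (source, sign). -/
noncomputable def InS (G : SDigraph (Fin n)) (k : Fin n) : Finset (Fin n × Bool) :=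
  univ.filter fun a => arcB G a.1 k a.2

noncomputable def deg (G : SDigraph (Fin n)) (j : Fin n) : ℕ := (OutS G j).card

/-- number of negative out-arcs of `j`. -/
noncomputable def zz (G : SDigraph (Fin n)) (j : Fin n) : ℕ :=
  ((OutS G j).filter fun a => a.2 = false).card

lemma mem_OutS {G : SDigraph (Fin n)} {j : Fin n} {a : Fin n × Bool} :
    a ∈ OutS G j ↔ arcB G j a.1 a.2 := by simp [OutS]

lemma mem_InS {G : SDigraph (Fin n)} {k : Fin n} {a : Fin n × Bool} :
    a ∈ InS G k ↔ arcB G a.1 k a.2 := by simp [InS]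

lemma in_iff_out {G : SDigraph (Fin n)} {k : Fin n} {a : Fin n × Bool} :
    a ∈ InS G k ↔ (k, a.2) ∈ OutS G a.1 := by simp [InS, OutS]

lemma zz_le_deg {G : SDigraph (Fin n)} {j : Fin n} : zz G j ≤ deg G j :=
  Finset.card_filter_le _ _

lemma deg_pos_of_out {G : SDigraph (Fin n)} {j : Fin n} {a : Fin n × Bool}
    (h : a ∈ OutS G j) : 0 < deg G j := Finset.card_pos.2 ⟨a, h⟩

lemma outdeg_eq (G : SDigraph (Fin n)) (j : Fin n) : G.outdeg j = deg G j := by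
  classical
  have hdecomp : OutS G j =
      ((univ.filter fun k => G.pos j k = true).image fun k => (k, true)) ∪
      ((univ.filter fun k => G.neg j k = true).image fun k => (k, false)) := by
    ext ⟨k, σ⟩
    cases σ <;> simp [mem_OutS, arcB]
  have hdisj : Disjoint ((univ.filter fun k => G.pos j k = true).image fun k => (k, true))
      ((univ.filter fun k => G.neg j k = true).image fun k => (k, false)) := by
    rw [Finset.disjoint_left]
    rintro ⟨k, σ⟩ h1 h2
    simp at h1 h2
    obtain ⟨_, _, _, hσ1⟩ := h1
    obtain ⟨_, _, _, hσ2⟩ := h2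
  have hinj1 : Function.Injective (fun k : Fin n => (k, true)) := by
    intro a b h; simpa using h
  have hinj2 : Function.Injective (fun k : Fin n => (k, false)) := by
    intro a b h; simpa using h
  rw [SDigraph.outdeg, deg, hdecomp, Finset.card_union_of_disjoint hdisj,
    Finset.card_image_of_injective _ hinj1, Finset.card_image_of_injective _ hinj2]

lemma indeg_pos {G : SDigraph (Fin n)} {k : Fin n} {a : Fin n × Bool}
    (h : a ∈ InS G k) : 0 < G.indeg k := by
  rw [mem_InS, arcB] at h
  rw [SDigraph.indeg]
  cases ha : a.2 <;> rw [ha] at h <;> simp only [if_true, if_false, Bool.false_eq_true] at h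
  · have h1 : 0 < (univ.filter fun j => G.neg j k = true).card :=
      Finset.card_pos.2 ⟨a.1, by simp [h]⟩
    omega
  · have h1 : 0 < (univ.filter fun j => G.pos j k = true).card :=
      Finset.card_pos.2 ⟨a.1, by simp [h]⟩
    omega

/-! ### Levels -/

/-- ordering key for the out-arcs of `j`, relative to a designated live arc `A j`:
negative arcs come first, with the live one last among negatives (if negative),
and first among positives (if positive). -/
def key (A : Fin n → Fin n × Bool) (j : Fin n) (a : Fin n × Bool) : ℕ :=
  (if a.2 then (if A j = a then 2 else 3) else (if A j = a then 1 else 0)) * n + a.1.val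

/-- the level of out-arc `a` of `j` : position (1-based) in the key order. -/
noncomputable def lvl (G : SDigraph (Fin n)) (A : Fin n → Fin n × Bool)
    (j : Fin n) (a : Fin n × Bool) : ℕ :=
  1 + ((OutS G j).filter fun b => key A j b < key A j a).card

lemma key_inj {A : Fin n → Fin n × Bool} {j : Fin n} {a b : Fin n × Bool}
    (h : key A j a = key A j b) : a = b := by
  rcases a with ⟨a1, a2⟩; rcases b with ⟨b1, b2⟩
  have ha : (a1 : ℕ) < n := a1.isLt
  have hb : (b1 : ℕ) < n := b1.isLt
  cases a2 <;> cases b2 <;>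
      simp only [key, Bool.false_eq_true, Bool.true_eq_false, if_true, if_false] at h <;>
      split_ifs at h <;>
    first
      | (exact absurd h (by omega))
      | (have h1 : (a1 : ℕ) = b1 := by omega
         exact congrArg₂ Prod.mk (Fin.ext h1) rfl)


section Levels

variable {G : SDigraph (Fin n)} {A : Fin n → Fin n × Bool} {j : Fin n} {a b : Fin n × Bool}

lemma one_le_lvl : 1 ≤ lvl G A j a := Nat.le_add_right 1 _

lemma lvl_le_deg (ha : a ∈ OutS G j) : lvl G A j a ≤ deg G j := by
  have hsub : ((OutS G j).filter fun c => key A j c < key A j a) ⊆ (OutS G j).erase a := by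
    intro c hc
    rw [Finset.mem_filter] at hc
    rw [Finset.mem_erase]
    refine ⟨fun e => ?_, hc.1⟩
    rw [e] at hc
    exact lt_irrefl _ hc.2
  have h1 := Finset.card_le_card hsub
  have h2 : ((OutS G j).erase a).card = deg G j - 1 := by
    rw [Finset.card_erase_of_mem ha]; rfl
  have h3 : 1 ≤ deg G j := deg_pos_of_out ha
  rw [lvl]; omega

lemma lvl_lt_lvl (ha : a ∈ OutS G j) (hk : key A j a < key A j b) :
    lvl G A j a < lvl G A j b := by
  have hsub : ((OutS G j).filter fun c => key A j c < key A j a) ⊆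
      ((OutS G j).filter fun c => key A j c < key A j b) := by
    intro c hc
    rw [Finset.mem_filter] at hc ⊢
    exact ⟨hc.1, lt_trans hc.2 hk⟩
  have hss : ((OutS G j).filter fun c => key A j c < key A j a) ⊂
      ((OutS G j).filter fun c => key A j c < key A j b) := by
    refine Finset.ssubset_iff_of_subset hsub |>.2 ⟨a, ?_, ?_⟩
    · rw [Finset.mem_filter]; exact ⟨ha, hk⟩
    · rw [Finset.mem_filter]; rintro ⟨-, h⟩; exact lt_irrefl _ h
  exact Nat.add_lt_add_left (Finset.card_lt_card hss) 1

lemma lvl_inj (ha : a ∈ OutS G j) (hb : b ∈ OutS G j) (h : lvl G A j a = lvl G A j b) :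
    a = b := by
  rcases lt_trichotomy (key A j a) (key A j b) with hk | hk | hk
  · exact absurd h (Nat.ne_of_lt (lvl_lt_lvl ha hk))
  · exact key_inj hk
  · exact absurd h.symm (Nat.ne_of_lt (lvl_lt_lvl hb hk))

lemma key_lt_of_neg (h2 : a.2 = false) : key A j a < 2 * n := by
  have h := a.1.isLt
  rw [key, h2]
  simp only [Bool.false_eq_true, if_false]
  split_ifs <;> omega

lemma key_ge_of_pos (h2 : a.2 = true) : 2 * n ≤ key A j a := by
  rw [key, h2]
  simp only [if_true]
  split_ifs <;> omega

lemma lvl_neg_le (ha : a ∈ OutS G j) (h2 : a.2 = false) : lvl G A j a ≤ zz G j := by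
  have hsub : ((OutS G j).filter fun c => key A j c < key A j a) ⊆
      ((OutS G j).filter fun c => c.2 = false).erase a := by
    intro c hc
    rw [Finset.mem_filter] at hc
    rw [Finset.mem_erase, Finset.mem_filter]
    have hc2 : c.2 = false := by
      by_contra hcc
      have := key_ge_of_pos (A := A) (j := j) (a := c) (by simpa using hcc)
      have := key_lt_of_neg (A := A) (j := j) (a := a) h2
      omega
    refine ⟨fun e => ?_, hc.1, hc2⟩
    rw [e] at hc
    exact lt_irrefl _ hc.2
  have h1 := Finset.card_le_card hsub
  have hz : 1 ≤ zz G j := by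
    apply Finset.card_pos.2
    exact ⟨a, Finset.mem_filter.2 ⟨ha, h2⟩⟩
  have h2' : (((OutS G j).filter fun c => c.2 = false).erase a).card =
      ((OutS G j).filter fun c => c.2 = false).card - 1 :=
    Finset.card_erase_of_mem (Finset.mem_filter.2 ⟨ha, h2⟩)
  have hzz : zz G j = ((OutS G j).filter fun c => c.2 = false).card := rfl
  rw [lvl]; omega

lemma lvl_pos_ge (h2 : a.2 = true) : zz G j + 1 ≤ lvl G A j a := by
  have hsub : ((OutS G j).filter fun c => c.2 = false) ⊆
      ((OutS G j).filter fun c => key A j c < key A j a) := by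
    intro c hc
    rw [Finset.mem_filter] at hc ⊢
    have := key_lt_of_neg (A := A) (j := j) (a := c) hc.2
    have := key_ge_of_pos (A := A) (j := j) (a := a) h2
    exact ⟨hc.1, by omega⟩
  have h1 := Finset.card_le_card hsub
  have hzz : zz G j = ((OutS G j).filter fun c => c.2 = false).card := rfl
  rw [lvl]; omega

lemma lvl_live_neg (hA : A j ∈ OutS G j) (h2 : (A j).2 = false) :
    lvl G A j (A j) = zz G j := by
  have hkey : key A j (A j) = 1 * n + (A j).1.val := by rw [key, h2]; simp
  have hset : ((OutS G j).filter fun c => key A j c < key A j (A j)) =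
      ((OutS G j).filter fun c => c.2 = false).erase (A j) := by
    ext c
    rw [Finset.mem_filter, Finset.mem_erase, Finset.mem_filter]
    constructor
    · rintro ⟨hc1, hc2⟩
      have hc3 : c.2 = false := by
        by_contra hcc
        have := key_ge_of_pos (A := A) (j := j) (a := c) (by simpa using hcc)
        have := (A j).1.isLt
        omega
      refine ⟨fun e => ?_, hc1, hc3⟩
      rw [e] at hc2
      exact lt_irrefl _ hc2
    · rintro ⟨hne, hc1, hc2⟩
      refine ⟨hc1, ?_⟩
      have : key A j c = 0 * n + c.1.val := by
        rw [key, hc2]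
        simp only [Bool.false_eq_true, if_false]
        rw [if_neg (show ¬ A j = c from fun e => hne e.symm)]
      rw [this, hkey]
      have := c.1.isLt
      omega
  have hz : 1 ≤ zz G j := by
    apply Finset.card_pos.2
    exact ⟨A j, Finset.mem_filter.2 ⟨hA, h2⟩⟩
  rw [lvl, hset, Finset.card_erase_of_mem (Finset.mem_filter.2 ⟨hA, h2⟩)]
  have hzz : zz G j = ((OutS G j).filter fun c => c.2 = false).card := rfl
  omega

lemma lvl_live_pos (h2 : (A j).2 = true) :
    lvl G A j (A j) = zz G j + 1 := by
  have hkey : key A j (A j) = 2 * n + (A j).1.val := by rw [key, h2]; simp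
  have hset : ((OutS G j).filter fun c => key A j c < key A j (A j)) =
      ((OutS G j).filter fun c => c.2 = false) := by
    ext c
    rw [Finset.mem_filter, Finset.mem_filter]
    constructor
    · rintro ⟨hc1, hc2⟩
      refine ⟨hc1, ?_⟩
      by_contra hcc
      have hc3 : c.2 = true := by simpa using hcc
      rcases eq_or_ne (A j) c with e | e
      · rw [e] at hc2; exact lt_irrefl _ hc2
      · have hk3 : key A j c = 3 * n + c.1.val := by
          rw [key, hc3]
          simp only [if_true]
          rw [if_neg e]
        have := (A j).1.isLt
        omega
    · rintro ⟨hc1, hc2⟩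
      refine ⟨hc1, ?_⟩
      have := key_lt_of_neg (A := A) (j := j) (a := c) hc2
      have := (A j).1.isLt
      omega
  rw [lvl, hset]
  have hzz : zz G j = ((OutS G j).filter fun c => c.2 = false).card := rfl
  omega

end Levels


section Construction

variable {n : ℕ}

/-- vertex set of the cycle -/
noncomputable def Cf {m : ℕ} (v : Fin (m+1) → Fin n) : Finset (Fin n) :=
  univ.image v

/-- iterated "bad" closure: vertices all of whose outgoing paths are
inevitably absorbed by the cycle -/
noncomputable def Bs (G : SDigraph (Fin n)) {m : ℕ} (v : Fin (m+1) → Fin n) :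
    ℕ → Finset (Fin n)
  | 0 => Cf v
  | t+1 => Bs G v t ∪ univ.filter fun j => 0 < deg G j ∧ ∀ a ∈ OutS G j, a.1 ∈ Bs G v t

noncomputable def BB (G : SDigraph (Fin n)) {m : ℕ} (v : Fin (m+1) → Fin n) :
    Finset (Fin n) := Bs G v n

noncomputable def Bad (G : SDigraph (Fin n)) {m : ℕ} (v : Fin (m+1) → Fin n) :
    Finset (Fin n) := BB G v \ Cf v

noncomputable def stage (G : SDigraph (Fin n)) {m : ℕ} (v : Fin (m+1) → Fin n)
    (j : Fin n) : ℕ := sInf {t | j ∈ Bs G v t}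

variable {G : SDigraph (Fin n)} {m : ℕ} {v : Fin (m+1) → Fin n} {s : Fin (m+1) → Bool}

lemma Bs_succ_subset {t : ℕ} : Bs G v t ⊆ Bs G v (t + 1) := by
  intro x hx
  rw [Bs]
  exact Finset.mem_union_left _ hx

lemma Bs_mono {t t' : ℕ} (h : t ≤ t') : Bs G v t ⊆ Bs G v t' := by
  induction t', h using Nat.le_induction with
  | base => exact subset_rfl
  | succ u hu ih => exact ih.trans Bs_succ_subset

lemma Cf_nonempty : (Cf v).Nonempty := ⟨v 0, Finset.mem_image.2 ⟨0, Finset.mem_univ _, rfl⟩⟩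

lemma Bs_stab_step {t : ℕ} (h : Bs G v t = Bs G v (t + 1)) (u : ℕ) (hu : t ≤ u) :
    Bs G v u = Bs G v t := by
  induction u, hu using Nat.le_induction with
  | base => rfl
  | succ u hu ih =>
    have : Bs G v (u + 1) = Bs G v (t + 1) := by
      show (Bs G v u ∪ _) = (Bs G v t ∪ _)
      rw [ih]
    rw [this, ← h]

lemma BB_stab : Bs G v (n + 1) = BB G v := by
  have hex : ∃ t, t ≤ n ∧ Bs G v t = Bs G v (t + 1) := by
    by_contra hc
    push_neg at hc
    have hstrict : ∀ t, t ≤ n → t + 1 ≤ (Bs G v t).card := by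
      intro t ht
      induction t with
      | zero => exact Finset.card_pos.2 Cf_nonempty
      | succ t ih =>
        have h1 := ih (Nat.le_of_succ_le ht)
        have h2 : Bs G v t ⊂ Bs G v (t + 1) :=
          (Finset.ssubset_iff_of_subset Bs_succ_subset).2 (by
            rcases Finset.exists_of_ssubset ((Bs_succ_subset (G := G) (v := v) (t := t)).ssubset_of_ne
              (hc t (Nat.le_of_succ_le ht))) with ⟨x, hx1, hx2⟩
            exact ⟨x, hx1, hx2⟩)
        have := Finset.card_lt_card h2
        omega
    have h1 := hstrict n le_rfl
    have h2 : (Bs G v n).card ≤ n := by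
      have := Finset.card_le_univ (Bs G v n)
      simpa using this
    omega
  rcases hex with ⟨t, ht, hstab⟩
  have h1 := Bs_stab_step hstab n ht
  have h2 := Bs_stab_step hstab (n + 1) (Nat.le_succ_of_le ht)
  rw [BB, h1, h2]

lemma nonbad_escape {j : Fin n} (hj : j ∉ BB G v) (hd : 0 < deg G j) :
    ∃ a ∈ OutS G j, a.1 ∉ BB G v := by
  by_contra hc
  push_neg at hc
  have : j ∈ Bs G v (n + 1) := by
    rw [Bs]
    exact Finset.mem_union_right _ (Finset.mem_filter.2 ⟨Finset.mem_univ _, hd, hc⟩)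
  rw [BB_stab] at this
  exact hj this

lemma stage_mem {j : Fin n} (hj : j ∈ BB G v) : j ∈ Bs G v (stage G v j) := by
  have h := Nat.sInf_mem (s := {t | j ∈ Bs G v t}) ⟨n, hj⟩
  exact h

lemma stage_le {j : Fin n} {t : ℕ} (hj : j ∈ Bs G v t) : stage G v j ≤ t :=
  Nat.sInf_le hj

lemma stage_le_n {j : Fin n} (hj : j ∈ BB G v) : stage G v j ≤ n := stage_le hj

lemma mem_Cf {j : Fin n} : j ∈ Cf v ↔ ∃ t, v t = j := by simp [Cf]

lemma Cf_subset_BB : Cf v ⊆ BB G v := Bs_mono (Nat.zero_le n)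

lemma bad_spec {j : Fin n} (hj : j ∈ Bad G v) :
    1 ≤ stage G v j ∧ 0 < deg G j ∧
      ∀ a ∈ OutS G j, a.1 ∈ Bs G v (stage G v j - 1) := by
  have hj1 : j ∈ BB G v := (Finset.mem_sdiff.1 hj).1
  have hj2 : j ∉ Cf v := (Finset.mem_sdiff.1 hj).2
  have hst := stage_mem hj1
  have h1 : 1 ≤ stage G v j := by
    rcases Nat.eq_zero_or_pos (stage G v j) with h | h
    · rw [h] at hst
      exact absurd hst hj2
    · exact h
  obtain ⟨p, hp⟩ : ∃ p, stage G v j = p + 1 := ⟨stage G v j - 1, by omega⟩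
  have hnot : j ∉ Bs G v p := by
    intro hmem
    have := stage_le hmem
    omega
  rw [hp] at hst
  rw [Bs] at hst
  rcases Finset.mem_union.1 hst with h | h
  · exact absurd h hnot
  · have := Finset.mem_filter.1 h
    refine ⟨h1, this.2.1, ?_⟩
    have : ∀ a ∈ OutS G j, a.1 ∈ Bs G v p := this.2.2
    rw [hp]
    simpa using this

lemma stage_target_lt {j : Fin n} (hj : j ∈ Bad G v) {a : Fin n × Bool}
    (ha : a ∈ OutS G j) : stage G v a.1 < stage G v j := by
  obtain ⟨h1, -, h3⟩ := bad_spec hj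
  have := stage_le (h3 a ha)
  omega

/-! ### The choice of live arcs -/

noncomputable def astar (G : SDigraph (Fin n)) {m : ℕ} (v : Fin (m+1) → Fin n)
    (s : Fin (m+1) → Bool) : Fin n → Fin n × Bool := fun j =>
  if h : ∃ t, v t = j then (v (h.choose + 1), s h.choose)
  else if h2 : ∃ a ∈ OutS G j, a.1 ∉ BB G v then h2.choose
  else if h3 : (OutS G j).Nonempty then h3.choose
  else (j, true)

lemma astar_cyc (hinj : Function.Injective v) (t : Fin (m + 1)) :
    astar G v s (v t) = (v (t + 1), s t) := by
  have h : ∃ t', v t' = v t := ⟨t, rfl⟩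
  rw [astar, dif_pos h]
  have : h.choose = t := hinj h.choose_spec
  rw [this]

lemma astar_out (hinj : Function.Injective v)
    (harc : ∀ t, arcB G (v t) (v (t + 1)) (s t)) {j : Fin n} (hd : 0 < deg G j) :
    astar G v s j ∈ OutS G j := by
  rw [astar]
  split_ifs with h h2 h3
  · set c := h.choose with hc
    have hs : v c = j := h.choose_spec
    have h2 := harc c
    rw [hs] at h2
    exact mem_OutS.2 h2
  · exact h2.choose_spec.1
  · exact h3.choose_spec
  · rw [deg] at hd
    rw [Finset.card_pos] at hd
    exact absurd hd h3

lemma astar_nonbad {j : Fin n} (hj : j ∉ BB G v) (hd : 0 < deg G j) :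
    (astar G v s j).1 ∉ BB G v := by
  have h1 : ¬ ∃ t, v t = j := by
    rintro ⟨t, ht⟩
    exact hj (Cf_subset_BB (mem_Cf.2 ⟨t, ht⟩))
  have h2 : ∃ a ∈ OutS G j, a.1 ∉ BB G v := nonbad_escape hj hd
  rw [astar, dif_neg h1, dif_pos h2]
  exact h2.choose_spec.2

end Construction

section Tau

variable {n : ℕ}

/-- the sign `a.2` applied to the boolean `T a.1`. -/
def stv (T : Fin n → Bool) (a : Fin n × Bool) : Bool := if a.2 then T a.1 else !(T a.1)

/-- fuelled computation of the forced values on the bad set -/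
noncomputable def gtau (G : SDigraph (Fin n)) {m : ℕ} (v : Fin (m+1) → Fin n)
    (s : Fin (m+1) → Bool) : ℕ → Fin n → Bool
  | 0 => fun _ => false
  | t+1 => fun j => decide (∃ a ∈ InS G j,
      astar G v s a.1 = (j, a.2) ∧ a.1 ∈ Bad G v ∧ stv (gtau G v s t) a = true)

noncomputable def TT (G : SDigraph (Fin n)) {m : ℕ} (v : Fin (m+1) → Fin n)
    (s : Fin (m+1) → Bool) : Fin n → Bool := gtau G v s (n+1)

variable {G : SDigraph (Fin n)} {m : ℕ} {v : Fin (m+1) → Fin n} {s : Fin (m+1) → Bool}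

lemma stage_live_lt (hinj : Function.Injective v)
    (harc : ∀ t, arcB G (v t) (v (t + 1)) (s t))
    {p j : Fin n} {b : Bool} (hp : p ∈ Bad G v) (hl : astar G v s p = (j, b)) :
    stage G v j < stage G v p := by
  have hd : 0 < deg G p := (bad_spec hp).2.1
  have h1 := astar_out hinj harc hd (j := p)
  have h2 := stage_target_lt hp h1
  rw [hl] at h2
  exact h2

lemma gtau_stab (hinj : Function.Injective v)
    (harc : ∀ t, arcB G (v t) (v (t + 1)) (s t)) :
    ∀ μ : ℕ, ∀ j ∈ Bad G v, n + 1 - stage G v j ≤ μ →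
    ∀ t t' : ℕ, n + 1 ≤ t + stage G v j → n + 1 ≤ t' + stage G v j →
    gtau G v s t j = gtau G v s t' j := by
  intro μ
  induction μ with
  | zero =>
    intro j hj hμ t t' ht ht'
    have h2 := stage_le_n (Finset.mem_sdiff.1 hj).1
    omega
  | succ μ ih =>
    intro j hj hμ t t' ht ht'
    have hstn := stage_le_n (Finset.mem_sdiff.1 hj).1
    obtain ⟨t1, rfl⟩ : ∃ t1, t = t1 + 1 := ⟨t - 1, by omega⟩
    obtain ⟨t1', rfl⟩ : ∃ t1', t' = t1' + 1 := ⟨t' - 1, by omega⟩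
    show decide _ = decide _
    rw [decide_eq_decide]
    have key : ∀ a : Fin n × Bool, astar G v s a.1 = (j, a.2) → a.1 ∈ Bad G v →
        stv (gtau G v s t1) a = stv (gtau G v s t1') a := by
      intro a hl hb
      have hlt := stage_live_lt hinj harc hb hl
      have hg : gtau G v s t1 a.1 = gtau G v s t1' a.1 := by
        apply ih a.1 hb (by omega) t1 t1' (by omega) (by omega)
      unfold stv
      rw [hg]
    constructor
    · rintro ⟨a, ha, hl, hb, hs'⟩
      exact ⟨a, ha, hl, hb, (key a hl hb) ▸ hs'⟩
    · rintro ⟨a, ha, hl, hb, hs'⟩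
      exact ⟨a, ha, hl, hb, (key a hl hb).symm ▸ hs'⟩

lemma TT_eq (hinj : Function.Injective v)
    (harc : ∀ t, arcB G (v t) (v (t + 1)) (s t)) {j : Fin n} (hj : j ∈ Bad G v) :
    TT G v s j = true ↔ ∃ a ∈ InS G j,
      astar G v s a.1 = (j, a.2) ∧ a.1 ∈ Bad G v ∧ stv (TT G v s) a = true := by
  have h1 : TT G v s j = gtau G v s (n + 1) j := rfl
  rw [h1]
  show decide _ = true ↔ _
  rw [decide_eq_true_iff]
  have key : ∀ a : Fin n × Bool, astar G v s a.1 = (j, a.2) → a.1 ∈ Bad G v →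
      stv (gtau G v s n) a = stv (TT G v s) a := by
    intro a hl hb
    have hst1 : 1 ≤ stage G v a.1 := (bad_spec hb).1
    have hg : gtau G v s n a.1 = gtau G v s (n + 1) a.1 :=
      gtau_stab hinj harc (n + 1) a.1 hb (by omega) n (n + 1) (by omega) (by omega)
    unfold stv TT
    rw [hg]
  constructor
  · rintro ⟨a, ha, hl, hb, hs'⟩
    exact ⟨a, ha, hl, hb, (key a hl hb) ▸ hs'⟩
  · rintro ⟨a, ha, hl, hb, hs'⟩
    exact ⟨a, ha, hl, hb, (key a hl hb).symm ▸ hs'⟩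

end Tau

section Map

variable {n : ℕ}

noncomputable def lstar (G : SDigraph (Fin n)) {m : ℕ} (v : Fin (m+1) → Fin n)
    (s : Fin (m+1) → Bool) (j : Fin n) : ℕ :=
  if deg G j = 0 then 1 else lvl G (astar G v s) j (astar G v s j)

noncomputable def W1 (G : SDigraph (Fin n)) {m : ℕ} (v : Fin (m+1) → Fin n)
    (s : Fin (m+1) → Bool) (k : Fin n) : Finset (Fin n × Bool) :=
  (InS G k).filter fun a =>
    astar G v s a.1 = (k, a.2) ∧ a.1 ∈ Bad G v ∧ stv (TT G v s) a = true

noncomputable def LCs (G : SDigraph (Fin n)) {m : ℕ} (v : Fin (m+1) → Fin n)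
    (s : Fin (m+1) → Bool) (k : Fin n) : Finset (Fin n × Bool) :=
  (InS G k).filter fun a => astar G v s a.1 = (k, a.2) ∧ a.1 ∈ Cf v

noncomputable def W0 (G : SDigraph (Fin n)) {m : ℕ} (v : Fin (m+1) → Fin n)
    (s : Fin (m+1) → Bool) (k : Fin n) : Finset (Fin n × Bool) :=
  (InS G k).filter fun a =>
    ¬(astar G v s a.1 = (k, a.2) ∧
      (a.1 ∈ Cf v ∨ (a.1 ∈ Bad G v ∧ stv (TT G v s) a = true)))

/-- the "bit" carried by in-arc `a` of `k` at state `x` -/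
def ubP (G : SDigraph (Fin n)) {m : ℕ} (v : Fin (m+1) → Fin n)
    (s : Fin (m+1) → Bool) (x : Fin n → ℤ) (k : Fin n) (a : Fin n × Bool) : Prop :=
  if a.2 then ((lvl G (astar G v s) a.1 (k, a.2) : ℤ) ≤ x a.1)
  else ¬((lvl G (astar G v s) a.1 (k, a.2) : ℤ) ≤ x a.1)

/-- the boolean update rule -/
noncomputable def FbP (G : SDigraph (Fin n)) {m : ℕ} (v : Fin (m+1) → Fin n)
    (s : Fin (m+1) → Bool) (x : Fin n → ℤ) (k : Fin n) : Prop :=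
  ((∀ b ∈ LCs G v s k, ubP G v s x k b) ∧ (k ∈ Cf v ∨ (W1 G v s k).Nonempty) ∧
    (∀ b ∈ W1 G v s k, ubP G v s x k b)) ∨ (∃ b ∈ W0 G v s k, ubP G v s x k b)

noncomputable def ff (G : SDigraph (Fin n)) {m : ℕ} (v : Fin (m+1) → Fin n)
    (s : Fin (m+1) → Bool) (x : Fin n → ℤ) (k : Fin n) : ℤ :=
  (lstar G v s k : ℤ) - 1 + (if FbP G v s x k then 1 else 0)

noncomputable def Xs (G : SDigraph (Fin n)) (j : Fin n) : Finset ℤ :=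
  Finset.Icc 0 ((max 1 (deg G j) : ℕ) : ℤ)

variable {G : SDigraph (Fin n)} {m : ℕ} {v : Fin (m+1) → Fin n} {s : Fin (m+1) → Bool}

lemma one_le_lstar {j : Fin n} : 1 ≤ lstar G v s j := by
  rw [lstar]
  split_ifs
  · exact le_rfl
  · exact one_le_lvl

lemma lstar_eq_lvl {j : Fin n} (hd : 0 < deg G j) :
    lstar G v s j = lvl G (astar G v s) j (astar G v s j) := by
  rw [lstar, if_neg (by omega)]

lemma lstar_le (hinj : Function.Injective v)
    (harc : ∀ t, arcB G (v t) (v (t + 1)) (s t)) {j : Fin n} :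
    lstar G v s j ≤ max 1 (deg G j) := by
  rw [lstar]
  split_ifs with h
  · exact le_max_left _ _
  · exact le_trans (lvl_le_deg (astar_out hinj harc (by omega))) (le_max_right _ _)

lemma lstar_neg (hinj : Function.Injective v)
    (harc : ∀ t, arcB G (v t) (v (t + 1)) (s t)) {j : Fin n} (hd : 0 < deg G j)
    (h2 : (astar G v s j).2 = false) : lstar G v s j = zz G j := by
  rw [lstar_eq_lvl hd, lvl_live_neg (astar_out hinj harc hd) h2]

lemma lstar_pos' {j : Fin n} (hd : 0 < deg G j)
    (h2 : (astar G v s j).2 = true) : lstar G v s j = zz G j + 1 := by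
  rw [lstar_eq_lvl hd, lvl_live_pos h2]

lemma ubP_true {x : Fin n → ℤ} {k : Fin n} {a : Fin n × Bool} (h : a.2 = true) :
    ubP G v s x k a ↔ ((lvl G (astar G v s) a.1 (k, a.2) : ℤ) ≤ x a.1) := by
  rw [ubP, h]
  simp

lemma ubP_false {x : Fin n → ℤ} {k : Fin n} {a : Fin n × Bool} (h : a.2 = false) :
    ubP G v s x k a ↔ ¬((lvl G (astar G v s) a.1 (k, a.2) : ℤ) ≤ x a.1) := by
  rw [ubP, h]
  simp

/-- at the neutral value `zz`, every out-bit of a vertex is off. -/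
lemma bit_neutral {x : Fin n → ℤ} {k : Fin n} {a : Fin n × Bool}
    (ha : a ∈ InS G k) (hx : x a.1 = (zz G a.1 : ℤ)) : ¬ ubP G v s x k a := by
  have hout : (k, a.2) ∈ OutS G a.1 := in_iff_out.1 ha
  cases h2 : a.2
  · rw [ubP_false h2]
    have h3 : lvl G (astar G v s) a.1 (k, a.2) ≤ zz G a.1 := lvl_neg_le hout (by rw [h2])
    intro hcon
    apply hcon
    rw [hx]
    exact_mod_cast h3
  · rw [ubP_true h2]
    have h3 : zz G a.1 + 1 ≤ lvl G (astar G v s) a.1 (k, a.2) := lvl_pos_ge (by rw [h2])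
    rw [hx]
    intro hcon
    have : ((zz G a.1 + 1 : ℕ) : ℤ) ≤ (zz G a.1 : ℤ) := le_trans (by exact_mod_cast h3) hcon
    omega

/-- at an "alive" value, every non-live out-bit is off. -/
lemma bit_nonlive {x : Fin n → ℤ} {k : Fin n} {a : Fin n × Bool}
    (hinj : Function.Injective v) (harc : ∀ t, arcB G (v t) (v (t + 1)) (s t))
    (ha : a ∈ InS G k) (hnl : (k, a.2) ≠ astar G v s a.1)
    (hx : x a.1 = (lstar G v s a.1 : ℤ) - 1 ∨ x a.1 = (lstar G v s a.1 : ℤ)) :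
    ¬ ubP G v s x k a := by
  have hout : (k, a.2) ∈ OutS G a.1 := in_iff_out.1 ha
  have hd : 0 < deg G a.1 := deg_pos_of_out hout
  have hA : astar G v s a.1 ∈ OutS G a.1 := astar_out hinj harc hd
  have hne : lvl G (astar G v s) a.1 (k, a.2) ≠ lvl G (astar G v s) a.1 (astar G v s a.1) :=
    fun he => hnl (lvl_inj hout hA he)
  have h1 : 1 ≤ lvl G (astar G v s) a.1 (k, a.2) := one_le_lvl
  cases h2 : a.2
  · rw [ubP_false h2]
    have h3 : lvl G (astar G v s) a.1 (k, a.2) ≤ zz G a.1 := lvl_neg_le hout (by rw [h2])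
    intro hcon
    apply hcon
    cases hsg : (astar G v s a.1).2
    · have h4 : lstar G v s a.1 = zz G a.1 := lstar_neg hinj harc hd hsg
      have h5 : lvl G (astar G v s) a.1 (astar G v s a.1) = zz G a.1 := lvl_live_neg hA hsg
      have h6 : lvl G (astar G v s) a.1 (k, a.2) ≠ zz G a.1 := by rw [← h5]; exact hne
      rcases hx with h | h <;> rw [h, h4] <;> omega
    · have h4 : lstar G v s a.1 = zz G a.1 + 1 := lstar_pos' hd hsg
      rcases hx with h | h <;> rw [h, h4] <;> push_cast <;> omega
  · rw [ubP_true h2]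
    have h3 : zz G a.1 + 1 ≤ lvl G (astar G v s) a.1 (k, a.2) := lvl_pos_ge (by rw [h2])
    intro hcon
    cases hsg : (astar G v s a.1).2
    · have h4 : lstar G v s a.1 = zz G a.1 := lstar_neg hinj harc hd hsg
      rw [h4] at hx
      rcases hx with h | h <;> rw [h] at hcon <;> omega
    · have h4 : lstar G v s a.1 = zz G a.1 + 1 := lstar_pos' hd hsg
      have h5 : lvl G (astar G v s) a.1 (astar G v s a.1) = zz G a.1 + 1 := lvl_live_pos hsg
      have h6 : lvl G (astar G v s) a.1 (k, a.2) ≠ zz G a.1 + 1 := by rw [← h5]; exact hne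
      rw [h4] at hx
      rcases hx with h | h <;> rw [h] at hcon <;> push_cast at hcon <;> omega

/-- the live bit at the high alive value -/
lemma bit_live_hi {x : Fin n → ℤ} {k : Fin n} {a : Fin n × Bool}
    (ha : a ∈ InS G k) (hl : (k, a.2) = astar G v s a.1)
    (hx : x a.1 = (lstar G v s a.1 : ℤ)) : ubP G v s x k a ↔ a.2 = true := by
  have hout : (k, a.2) ∈ OutS G a.1 := in_iff_out.1 ha
  have hd : 0 < deg G a.1 := deg_pos_of_out hout
  have hlv : lvl G (astar G v s) a.1 (k, a.2) = lstar G v s a.1 := by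
    rw [lstar_eq_lvl hd, ← hl]
  cases h2 : a.2
  · rw [ubP_false h2]
    simp only [Bool.false_eq_true, iff_false, not_not]
    rw [hlv, hx]
  · rw [ubP_true h2]
    simp only [iff_true]
    rw [hlv, hx]

/-- the live bit at the low alive value -/
lemma bit_live_lo {x : Fin n → ℤ} {k : Fin n} {a : Fin n × Bool}
    (ha : a ∈ InS G k) (hl : (k, a.2) = astar G v s a.1)
    (hx : x a.1 = (lstar G v s a.1 : ℤ) - 1) : ubP G v s x k a ↔ a.2 = false := by
  have hout : (k, a.2) ∈ OutS G a.1 := in_iff_out.1 ha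
  have hd : 0 < deg G a.1 := deg_pos_of_out hout
  have hlv : lvl G (astar G v s) a.1 (k, a.2) = lstar G v s a.1 := by
    rw [lstar_eq_lvl hd, ← hl]
  cases h2 : a.2
  · rw [ubP_false h2]
    simp only [iff_true]
    rw [hlv, hx]
    omega
  · rw [ubP_true h2]
    simp only [Bool.true_eq_false, iff_false, not_le]
    rw [hlv, hx]
    omega

/-- while toggling the bit of arc `a`, the bit of the parallel arc of
opposite sign is off. -/
lemma bit_partner {x : Fin n → ℤ} {k : Fin n} {a b : Fin n × Bool}
    (ha : a ∈ InS G k) (hb : b ∈ InS G k) (hab : b.1 = a.1) (hss : b.2 = !a.2)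
    (hlo : (lvl G (astar G v s) a.1 (k, a.2) : ℤ) - 1 ≤ x a.1)
    (hhi : x a.1 ≤ (lvl G (astar G v s) a.1 (k, a.2) : ℤ)) :
    ¬ ubP G v s x k b := by
  have houta : (k, a.2) ∈ OutS G a.1 := in_iff_out.1 ha
  have houtb : (k, b.2) ∈ OutS G b.1 := in_iff_out.1 hb
  rw [hab] at houtb
  cases h2 : a.2
  · have hb2 : b.2 = true := by rw [hss, h2]; rfl
    rw [ubP_true hb2, hab]
    have h3 : lvl G (astar G v s) a.1 (k, a.2) ≤ zz G a.1 := lvl_neg_le houta (by rw [h2])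
    have h4 : zz G a.1 + 1 ≤ lvl G (astar G v s) a.1 (k, b.2) :=
      lvl_pos_ge (a := (k, b.2)) (j := a.1) hb2
    intro hcon
    omega
  · have hb2 : b.2 = false := by rw [hss, h2]; rfl
    rw [ubP_false hb2, hab]
    intro hcon
    apply hcon
    have h3 : zz G a.1 + 1 ≤ lvl G (astar G v s) a.1 (k, a.2) := lvl_pos_ge (by rw [h2])
    have h4 : lvl G (astar G v s) a.1 (k, b.2) ≤ zz G a.1 :=
      lvl_neg_le (a := (k, b.2)) (j := a.1) houtb hb2
    omega

end Map

section Sound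

variable {n : ℕ} {G : SDigraph (Fin n)} {m : ℕ} {v : Fin (m+1) → Fin n}
  {s : Fin (m+1) → Bool}

lemma W1_subset {k : Fin n} : W1 G v s k ⊆ InS G k := Finset.filter_subset _ _
lemma LCs_subset {k : Fin n} : LCs G v s k ⊆ InS G k := Finset.filter_subset _ _
lemma W0_subset {k : Fin n} : W0 G v s k ⊆ InS G k := Finset.filter_subset _ _

lemma FbP_mono {x y : Fin n → ℤ} {k : Fin n}
    (h : ∀ b ∈ InS G k, ubP G v s x k b → ubP G v s y k b) :
    FbP G v s x k → FbP G v s y k := by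
  rintro (⟨h1, h2, h3⟩ | ⟨b, hb, hub⟩)
  · exact Or.inl ⟨fun b hb => h b (LCs_subset hb) (h1 b hb), h2,
      fun b hb => h b (W1_subset hb) (h3 b hb)⟩
  · exact Or.inr ⟨b, hb, h b (W0_subset hb) hub⟩

lemma FbP_congr {x y : Fin n → ℤ} {k : Fin n}
    (h : ∀ b ∈ InS G k, (ubP G v s x k b ↔ ubP G v s y k b)) :
    (FbP G v s x k ↔ FbP G v s y k) :=
  ⟨FbP_mono fun b hb => (h b hb).1, FbP_mono fun b hb => (h b hb).2⟩

lemma ubP_update_ne {x : Fin n → ℤ} {k j : Fin n} {w : ℤ} {b : Fin n × Bool}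
    (hbj : b.1 ≠ j) :
    ubP G v s (Function.update x j w) k b ↔ ubP G v s x k b := by
  rw [ubP, ubP, Function.update_of_ne hbj]

lemma ff_lt_iff {x y : Fin n → ℤ} {i : Fin n}
    (h : ff G v s x i < ff G v s y i) : ¬ FbP G v s x i ∧ FbP G v s y i := by
  rw [ff, ff] at h
  by_cases h1 : FbP G v s x i <;> by_cases h2 : FbP G v s y i
  · rw [if_pos h1, if_pos h2] at h; omega
  · rw [if_pos h1, if_neg h2] at h; omega
  · exact ⟨h1, h2⟩
  · rw [if_neg h1, if_neg h2] at h; omega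

/-- if `f i` can increase along a unit increase of `x j`, there is a positive
arc from `j` to `i`. -/
lemma incr_pos {x : Fin n → ℤ} {i j : Fin n}
    (h : ff G v s x i < ff G v s (Function.update x j (x j + 1)) i) :
    arcB G j i true := by
  by_contra hnp
  obtain ⟨hx, hx'⟩ := ff_lt_iff h
  apply hx
  apply FbP_mono (x := Function.update x j (x j + 1)) ?_ hx'
  intro b hb hub
  rcases eq_or_ne b.1 j with he | he
  · have hb2 : b.2 = false := by
      cases h2 : b.2
      · rfl
      · exfalso
        apply hnp
        have := mem_InS.1 hb
        rw [he, h2] at this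
        exact this
    rw [ubP_false hb2] at hub ⊢
    rw [he] at hub ⊢
    rw [Function.update_self] at hub
    intro hcon
    exact hub (by omega)
  · exact (ubP_update_ne he).1 hub

/-- if `f i` can decrease along a unit increase of `x j`, there is a negative
arc from `j` to `i`. -/
lemma decr_neg {x : Fin n → ℤ} {i j : Fin n}
    (h : ff G v s (Function.update x j (x j + 1)) i < ff G v s x i) :
    arcB G j i false := by
  by_contra hnp
  obtain ⟨hx', hx⟩ := ff_lt_iff h
  apply hx'
  apply FbP_mono (x := x) ?_ hx
  intro b hb hub
  rcases eq_or_ne b.1 j with he | he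
  · have hb2 : b.2 = true := by
      cases h2 : b.2
      · exfalso
        apply hnp
        have := mem_InS.1 hb
        rw [he, h2] at this
        exact this
      · rfl
    rw [ubP_true hb2] at hub ⊢
    rw [he] at hub ⊢
    rw [Function.update_self]
    omega
  · exact (ubP_update_ne he).2 hub

end Sound

section Witness

variable {n : ℕ} {G : SDigraph (Fin n)} {m : ℕ} {v : Fin (m+1) → Fin n}
  {s : Fin (m+1) → Bool}

lemma mem_W1 {k : Fin n} {a : Fin n × Bool} : a ∈ W1 G v s k ↔
    a ∈ InS G k ∧ astar G v s a.1 = (k, a.2) ∧ a.1 ∈ Bad G v ∧ stv (TT G v s) a = true := by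
  rw [W1, Finset.mem_filter]

lemma mem_LCs {k : Fin n} {a : Fin n × Bool} : a ∈ LCs G v s k ↔
    a ∈ InS G k ∧ astar G v s a.1 = (k, a.2) ∧ a.1 ∈ Cf v := by
  rw [LCs, Finset.mem_filter]

lemma mem_W0 {k : Fin n} {a : Fin n × Bool} : a ∈ W0 G v s k ↔
    a ∈ InS G k ∧ ¬(astar G v s a.1 = (k, a.2) ∧
      (a.1 ∈ Cf v ∨ (a.1 ∈ Bad G v ∧ stv (TT G v s) a = true))) := by
  rw [W0, Finset.mem_filter]

lemma not_W0_iff {k : Fin n} {a : Fin n × Bool} (ha : a ∈ InS G k) :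
    a ∉ W0 G v s k ↔ astar G v s a.1 = (k, a.2) ∧
      (a.1 ∈ Cf v ∨ (a.1 ∈ Bad G v ∧ stv (TT G v s) a = true)) := by
  rw [mem_W0]
  tauto

lemma partner_eq {j : Fin n} {σ : Bool} {b : Fin n × Bool} (h1 : b.1 = j)
    (h2 : b ≠ (j, σ)) : b = (j, !σ) := by
  rcases b with ⟨p, τ⟩
  simp only at h1
  subst h1
  cases τ <;> cases σ <;> simp_all

lemma LCs_elem (hinj : Function.Injective v)
    (harc : ∀ t, arcB G (v t) (v (t + 1)) (s t)) {i : Fin n} (hi : i ∈ Cf v) :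
    ∃ c, c ∈ LCs G v s i := by
  obtain ⟨t, -, ht⟩ := Finset.mem_image.1 hi
  refine ⟨(v (t - 1), s (t - 1)), mem_LCs.2 ⟨?_, ?_, ?_⟩⟩
  · rw [mem_InS]
    have := harc (t - 1)
    rw [sub_add_cancel, ht] at this
    exact this
  · show astar G v s (v (t - 1)) = (i, s (t - 1))
    rw [astar_cyc hinj, sub_add_cancel, ht]
  · exact Finset.mem_image.2 ⟨t - 1, Finset.mem_univ _, rfl⟩

lemma Cf_of_LCs (hinj : Function.Injective v) {i : Fin n} {c : Fin n × Bool}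
    (hc : c ∈ LCs G v s i) : i ∈ Cf v := by
  obtain ⟨hin, hlive, hCf⟩ := mem_LCs.1 hc
  obtain ⟨t, -, ht⟩ := Finset.mem_image.1 hCf
  rw [← ht, astar_cyc hinj] at hlive
  have : v (t + 1) = i := congrArg Prod.fst hlive
  exact Finset.mem_image.2 ⟨t + 1, Finset.mem_univ _, this⟩

lemma zz_pos_of_neg_live {p : Fin n} (hA : astar G v s p ∈ OutS G p)
    (h2 : (astar G v s p).2 = false) : 1 ≤ zz G p :=
  Finset.card_pos.2 ⟨astar G v s p, Finset.mem_filter.2 ⟨hA, h2⟩⟩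

/-- base values of the witness state for realizing the arc `(j, σ)` into `i`:
helpers are put at the appropriate alive value, everyone else at the neutral
value. -/
noncomputable def witBase (G : SDigraph (Fin n)) {m : ℕ} (v : Fin (m+1) → Fin n)
    (s : Fin (m+1) → Bool) (i j : Fin n) (σ : Bool) : Fin n → ℤ := fun p =>
  if (j, σ) ∈ W0 G v s i then (zz G p : ℤ)
  else if (astar G v s p).1 = i ∧ arcB G p i (astar G v s p).2 ∧
      (p ∈ Cf v ∨ (p ∈ Bad G v ∧ stv (TT G v s) (p, (astar G v s p).2) = true))
    then (if (astar G v s p).2 then (zz G p : ℤ) + 1 else (zz G p : ℤ) - 1)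
  else (zz G p : ℤ)

/-- the full witness state -/
noncomputable def wit (G : SDigraph (Fin n)) {m : ℕ} (v : Fin (m+1) → Fin n)
    (s : Fin (m+1) → Bool) (i j : Fin n) (σ : Bool) : Fin n → ℤ := fun p =>
  if p = j then (lvl G (astar G v s) j (i, σ) : ℤ) - 1
  else witBase G v s i j σ p

end Witness

set_option maxHeartbeats 2000000

section Central

variable {n : ℕ} {G : SDigraph (Fin n)} {m : ℕ} {v : Fin (m+1) → Fin n}
  {s : Fin (m+1) → Bool}

lemma central (hinj : Function.Injective v)
    (harc : ∀ t, arcB G (v t) (v (t + 1)) (s t)) {i j : Fin n} {σ : Bool}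
    (ha : (j, σ) ∈ InS G i) {x : Fin n → ℤ}
    (hxj : x j = (lvl G (astar G v s) j (i, σ) : ℤ) - 1 ∨
           x j = (lvl G (astar G v s) j (i, σ) : ℤ))
    (hxp : ∀ p, p ≠ j → x p = witBase G v s i j σ p) :
    (FbP G v s x i ↔ ubP G v s x i (j, σ)) := by
  have hlo : (lvl G (astar G v s) j (i, σ) : ℤ) - 1 ≤ x j := by
    rcases hxj with h | h <;> rw [h] <;> omega
  have hhi : x j ≤ (lvl G (astar G v s) j (i, σ) : ℤ) := by
    rcases hxj with h | h <;> rw [h] <;> omega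
  have hpart : ∀ b ∈ InS G i, b.1 = j → b ≠ (j, σ) → ¬ ubP G v s x i b := by
    intro b hb h1 h2
    have hb' := partner_eq h1 h2
    have hss : b.2 = !σ := congrArg Prod.snd hb'
    exact bit_partner (a := (j, σ)) ha hb h1 hss hlo hhi
  have hC1 : ∀ b ∈ W0 G v s i, b ≠ (j, σ) → ¬ ubP G v s x i b := by
    intro b hb hne
    rcases eq_or_ne b.1 j with h1 | h1
    · exact hpart b (W0_subset hb) h1 hne
    · have hv := hxp b.1 h1
      rw [witBase] at hv
      by_cases hcase : (j, σ) ∈ W0 G v s i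
      · rw [if_pos hcase] at hv
        exact bit_neutral (W0_subset hb) hv
      · rw [if_neg hcase] at hv
        by_cases hH : (astar G v s b.1).1 = i ∧ arcB G b.1 i (astar G v s b.1).2 ∧
            (b.1 ∈ Cf v ∨ (b.1 ∈ Bad G v ∧
              stv (TT G v s) (b.1, (astar G v s b.1).2) = true))
        · rw [if_pos hH] at hv
          have hnl : (i, b.2) ≠ astar G v s b.1 := by
            intro he
            have hW0 := mem_W0.1 hb
            apply hW0.2
            have h22 : (astar G v s b.1).2 = b.2 := by rw [← he]
            refine ⟨he.symm, ?_⟩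
            rcases hH.2.2 with hc | hc
            · exact Or.inl hc
            · right
              refine ⟨hc.1, ?_⟩
              have hstv := hc.2
              rw [h22] at hstv
              exact hstv
          have hd : 0 < deg G b.1 := deg_pos_of_out (in_iff_out.1 (W0_subset hb))
          apply bit_nonlive hinj harc (W0_subset hb) hnl
          cases h22 : (astar G v s b.1).2
          · rw [h22] at hv
            simp only [Bool.false_eq_true, if_false] at hv
            left
            rw [hv, lstar_neg hinj harc hd h22]
          · rw [h22] at hv
            simp only [if_true] at hv
            right
            rw [hv, lstar_pos' hd h22]
            push_cast
            ring
        · rw [if_neg hH] at hv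
          exact bit_neutral (W0_subset hb) hv
  by_cases hcase : (j, σ) ∈ W0 G v s i
  · constructor
    · rintro (⟨h1, h2, h3⟩ | ⟨b, hb, hub⟩)
      · exfalso
        rcases h2 with hCf | hNE
        · obtain ⟨c, hc⟩ := LCs_elem hinj harc hCf
          have hcin := LCs_subset hc
          have hcne : c ≠ (j, σ) := by
            intro he
            rw [he] at hc
            have hm := mem_LCs.1 hc
            exact (mem_W0.1 hcase).2 ⟨hm.2.1, Or.inl hm.2.2⟩
          rcases eq_or_ne c.1 j with h4 | h4
          · exact hpart c hcin h4 hcne (h1 c hc)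
          · have hv := hxp c.1 h4
            rw [witBase, if_pos hcase] at hv
            exact bit_neutral hcin hv (h1 c hc)
        · obtain ⟨c, hc⟩ := hNE
          have hcin := W1_subset hc
          have hcne : c ≠ (j, σ) := by
            intro he
            rw [he] at hc
            have hm := mem_W1.1 hc
            exact (mem_W0.1 hcase).2 ⟨hm.2.1, Or.inr ⟨hm.2.2.1, hm.2.2.2⟩⟩
          rcases eq_or_ne c.1 j with h4 | h4
          · exact hpart c hcin h4 hcne (h3 c hc)
          · have hv := hxp c.1 h4
            rw [witBase, if_pos hcase] at hv
            exact bit_neutral hcin hv (h3 c hc)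
      · by_cases he : b = (j, σ)
        · rw [← he]
          exact hub
        · exact absurd hub (hC1 b hb he)
    · intro h
      exact Or.inr ⟨(j, σ), hcase, h⟩
  · have ha0 := (not_W0_iff ha).1 hcase
    have hlivebit : ∀ b ∈ InS G i, b ≠ (j, σ) → astar G v s b.1 = (i, b.2) →
        (b.1 ∈ Cf v ∨ (b.1 ∈ Bad G v ∧ stv (TT G v s) b = true)) →
        ubP G v s x i b := by
      intro b hb hne hlive hcls
      have h1 : b.1 ≠ j := by
        intro he
        apply hne
        rw [he] at hlive
        have hee := ha0.1.symm.trans hlive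
        have hσ : σ = b.2 := congrArg Prod.snd hee
        exact Prod.ext he hσ.symm
      have hv := hxp b.1 h1
      rw [witBase, if_neg hcase] at hv
      have h22 : (astar G v s b.1).2 = b.2 := by rw [hlive]
      have hH : (astar G v s b.1).1 = i ∧ arcB G b.1 i (astar G v s b.1).2 ∧
          (b.1 ∈ Cf v ∨ (b.1 ∈ Bad G v ∧
            stv (TT G v s) (b.1, (astar G v s b.1).2) = true)) := by
        refine ⟨by rw [hlive], ?_, ?_⟩
        · rw [h22]
          exact mem_InS.1 hb
        · rcases hcls with hc | hc
          · exact Or.inl hc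
          · right
            refine ⟨hc.1, ?_⟩
            rw [h22]
            exact hc.2
      rw [if_pos hH] at hv
      have hd : 0 < deg G b.1 := deg_pos_of_out (in_iff_out.1 hb)
      cases h2b : (astar G v s b.1).2
      · rw [h2b] at hv
        simp only [Bool.false_eq_true, if_false] at hv
        have hb2 : b.2 = false := by rw [← h22, h2b]
        refine (bit_live_lo hb hlive.symm ?_).2 hb2
        rw [hv, lstar_neg hinj harc hd h2b]
      · rw [h2b] at hv
        simp only [if_true] at hv
        have hb2 : b.2 = true := by rw [← h22, h2b]
        refine (bit_live_hi hb hlive.symm ?_).2 hb2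
        rw [hv, lstar_pos' hd h2b]
        push_cast
        ring
    constructor
    · rintro (⟨h1, h2, h3⟩ | ⟨b, hb, hub⟩)
      · rcases ha0.2 with hCf | hBad
        · exact h1 (j, σ) (mem_LCs.2 ⟨ha, ha0.1, hCf⟩)
        · exact h3 (j, σ) (mem_W1.2 ⟨ha, ha0.1, hBad.1, hBad.2⟩)
      · have hne : b ≠ (j, σ) := fun he => hcase (he ▸ hb)
        exact absurd hub (hC1 b hb hne)
    · intro h
      left
      refine ⟨?_, ?_, ?_⟩
      · intro b hb
        by_cases he : b = (j, σ)
        · rw [he]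
          exact h
        · have hm := mem_LCs.1 hb
          exact hlivebit b hm.1 he hm.2.1 (Or.inl hm.2.2)
      · rcases ha0.2 with hCf | hBad
        · exact Or.inl (Cf_of_LCs hinj (mem_LCs.2 ⟨ha, ha0.1, hCf⟩))
        · exact Or.inr ⟨(j, σ), mem_W1.2 ⟨ha, ha0.1, hBad.1, hBad.2⟩⟩
      · intro b hb
        by_cases he : b = (j, σ)
        · rw [he]
          exact h
        · have hm := mem_W1.1 hb
          exact hlivebit b hm.1 he hm.2.1 (Or.inr ⟨hm.2.2.1, hm.2.2.2⟩)

end Central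

section Realize

variable {n : ℕ} {G : SDigraph (Fin n)} {m : ℕ} {v : Fin (m+1) → Fin n}
  {s : Fin (m+1) → Bool}

lemma mem_Xs {p : Fin n} {w : ℤ} : w ∈ Xs G p ↔ 0 ≤ w ∧ w ≤ max 1 (deg G p) := by
  rw [Xs, Finset.mem_Icc]

lemma witBase_mem (hinj : Function.Injective v)
    (harc : ∀ t, arcB G (v t) (v (t + 1)) (s t)) {i j p : Fin n} {σ : Bool} :
    witBase G v s i j σ p ∈ Xs G p := by
  have hz : zz G p ≤ deg G p := zz_le_deg
  have hm : deg G p ≤ max 1 (deg G p) := le_max_right _ _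
  rw [mem_Xs, witBase]
  split_ifs with h1 h2 h3
  · constructor <;> push_cast <;> omega
  · have hd : 0 < deg G p := by
      apply deg_pos_of_out (a := (i, (astar G v s p).2))
      exact mem_OutS.2 h2.2.1
    have hls : lstar G v s p = zz G p + 1 := lstar_pos' hd h3
    have := lstar_le hinj harc (j := p)
    rw [hls] at this
    constructor <;> push_cast <;> omega
  · have hd : 0 < deg G p := by
      apply deg_pos_of_out (a := (i, (astar G v s p).2))
      exact mem_OutS.2 h2.2.1
    have hzp : 1 ≤ zz G p :=
      zz_pos_of_neg_live (astar_out hinj harc hd) (by simpa using h3)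
    constructor <;> push_cast <;> omega
  · constructor <;> push_cast <;> omega

lemma wit_mem (hinj : Function.Injective v)
    (harc : ∀ t, arcB G (v t) (v (t + 1)) (s t)) {i j p : Fin n} {σ : Bool}
    (ha : (j, σ) ∈ InS G i) : wit G v s i j σ p ∈ Xs G p := by
  rw [wit]
  split_ifs with h1
  · subst h1
    have h2 : 1 ≤ lvl G (astar G v s) p (i, σ) := one_le_lvl
    have h3 : lvl G (astar G v s) p (i, σ) ≤ deg G p := lvl_le_deg (in_iff_out.1 ha)
    rw [mem_Xs]
    have hm : deg G p ≤ max 1 (deg G p) := le_max_right _ _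
    constructor <;> push_cast <;> omega
  · exact witBase_mem hinj harc

lemma realize (hinj : Function.Injective v)
    (harc : ∀ t, arcB G (v t) (v (t + 1)) (s t)) {i j : Fin n} {σ : Bool}
    (ha : arcB G j i σ) :
    ∃ x : Fin n → ℤ, (∀ p, x p ∈ Xs G p) ∧ x j + 1 ∈ Xs G j ∧
      (if σ then ff G v s x i < ff G v s (Function.update x j (x j + 1)) i
       else ff G v s (Function.update x j (x j + 1)) i < ff G v s x i) := by
  have hain : (j, σ) ∈ InS G i := mem_InS.2 ha
  set L : ℤ := (lvl G (astar G v s) j (i, σ) : ℤ) with hL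
  set x : Fin n → ℤ := wit G v s i j σ with hx
  have hwitj : x j = L - 1 := by rw [hx, wit, if_pos rfl]
  have hwitp : ∀ p, p ≠ j → x p = witBase G v s i j σ p := by
    intro p hp
    rw [hx, wit, if_neg hp]
  set x' : Fin n → ℤ := Function.update x j (x j + 1) with hx'
  have hx'j : x' j = L := by
    rw [hx', Function.update_self, hwitj]
    ring
  have hx'p : ∀ p, p ≠ j → x' p = witBase G v s i j σ p := by
    intro p hp
    rw [hx', Function.update_of_ne hp]
    exact hwitp p hp
  have hc1 : FbP G v s x i ↔ ubP G v s x i (j, σ) :=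
    central hinj harc hain (Or.inl hwitj) hwitp
  have hc2 : FbP G v s x' i ↔ ubP G v s x' i (j, σ) :=
    central hinj harc hain (Or.inr hx'j) hx'p
  have hLd : 1 ≤ lvl G (astar G v s) j (i, σ) := one_le_lvl
  have hLu : lvl G (astar G v s) j (i, σ) ≤ deg G j := lvl_le_deg (in_iff_out.1 hain)
  refine ⟨x, fun p => wit_mem hinj harc hain, ?_, ?_⟩
  · rw [hwitj, mem_Xs]
    have hm : deg G j ≤ max 1 (deg G j) := le_max_right _ _
    constructor <;> push_cast <;> omega
  · cases hσ : σ
    · simp only [Bool.false_eq_true, if_false]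
      have hu1 : ubP G v s x i (j, σ) := by
        rw [ubP_false hσ]
        show ¬ (L ≤ x j)
        rw [hwitj]
        omega
      have hu2 : ¬ ubP G v s x' i (j, σ) := by
        rw [ubP_false hσ]
        intro hcon
        apply hcon
        show L ≤ x' j
        rw [hx'j]
      rw [ff, ff, if_pos (hc1.2 hu1), if_neg (fun hf => hu2 (hc2.1 hf))]
      omega
    · simp only [if_true]
      have hu1 : ¬ ubP G v s x i (j, σ) := by
        rw [ubP_true hσ]
        show ¬ (L ≤ x j)
        rw [hwitj]
        omega
      have hu2 : ubP G v s x' i (j, σ) := by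
        rw [ubP_true hσ]
        show L ≤ x' j
        rw [hx'j]
      rw [ff, ff, if_neg (fun hf => hu1 (hc1.1 hf)), if_pos (hc2.2 hu2)]
      omega

end Realize

section Fixed

variable {n : ℕ} {G : SDigraph (Fin n)} {m : ℕ} {v : Fin (m+1) → Fin n}
  {s : Fin (m+1) → Bool} {x : Fin n → ℤ}

lemma fp_alive (hfix : ∀ k, ff G v s x k = x k) (k : Fin n) :
    x k = (lstar G v s k : ℤ) - 1 ∨ x k = (lstar G v s k : ℤ) := by
  have h := hfix k
  rw [ff] at h
  split_ifs at h
  · right; omega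
  · left; omega

lemma fp_Bp_iff_FbP (hfix : ∀ k, ff G v s x k = x k) (k : Fin n) :
    (x k = (lstar G v s k : ℤ)) ↔ FbP G v s x k := by
  have h := hfix k
  rw [ff] at h
  by_cases hF : FbP G v s x k
  · rw [if_pos hF] at h
    constructor
    · intro _; exact hF
    · intro _; omega
  · rw [if_neg hF] at h
    constructor
    · intro hx; omega
    · intro hc; exact absurd hc hF

lemma fp_nonlive (hinj : Function.Injective v)
    (harc : ∀ t, arcB G (v t) (v (t + 1)) (s t))
    (hfix : ∀ k, ff G v s x k = x k) {k : Fin n} {b : Fin n × Bool}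
    (hb : b ∈ InS G k) (hnl : astar G v s b.1 ≠ (k, b.2)) : ¬ ubP G v s x k b :=
  bit_nonlive hinj harc hb (fun he => hnl he.symm) (fp_alive hfix b.1)

lemma fp_live (hfix : ∀ k, ff G v s x k = x k) {k : Fin n} {b : Fin n × Bool}
    (hb : b ∈ InS G k) (hl : astar G v s b.1 = (k, b.2)) :
    ubP G v s x k b ↔
      (if b.2 = true then x b.1 = (lstar G v s b.1 : ℤ)
       else ¬ (x b.1 = (lstar G v s b.1 : ℤ))) := by
  rcases fp_alive hfix b.1 with hlo | hhi
  · rw [bit_live_lo hb hl.symm hlo]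
    cases hb2 : b.2
    · simp only [Bool.false_eq_true, if_false]
      refine iff_of_true trivial ?_
      rw [hlo]
      intro hc
      omega
    · simp only [if_true]
      refine iff_of_false (by simp) ?_
      rw [hlo]
      intro hc
      omega
  · rw [bit_live_hi hb hl.symm hhi]
    cases hb2 : b.2
    · simp only [Bool.false_eq_true, if_false]
      exact iff_of_false (by simp) (fun hc => hc hhi)
    · simp only [if_true]
      exact iff_of_true trivial hhi

lemma fp_W0bits (hinj : Function.Injective v)
    (harc : ∀ t, arcB G (v t) (v (t + 1)) (s t))
    (hfix : ∀ k, ff G v s x k = x k) {k : Fin n} (hk : k ∈ BB G v)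
    (hforce : ∀ b ∈ InS G k, astar G v s b.1 = (k, b.2) → b.1 ∈ Bad G v →
      (x b.1 = (lstar G v s b.1 : ℤ) ↔ TT G v s b.1 = true)) :
    ∀ b ∈ W0 G v s k, ¬ ubP G v s x k b := by
  intro b hb
  by_cases hl : astar G v s b.1 = (k, b.2)
  · have hbin := W0_subset hb
    have hd : 0 < deg G b.1 := deg_pos_of_out (in_iff_out.1 hbin)
    have hsrc : b.1 ∈ BB G v := by
      by_contra hn
      have h2 := astar_nonbad (s := s) hn hd
      rw [hl] at h2
      exact h2 hk
    have hcond := (mem_W0.1 hb).2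
    by_cases hCf : b.1 ∈ Cf v
    · exact absurd ⟨hl, Or.inl hCf⟩ hcond
    · have hbad : b.1 ∈ Bad G v := Finset.mem_sdiff.2 ⟨hsrc, hCf⟩
      have hstv : ¬ (stv (TT G v s) b = true) := fun hs => hcond ⟨hl, Or.inr ⟨hbad, hs⟩⟩
      have hiff := fp_live hfix hbin hl
      have hfor := hforce b hbin hl hbad
      intro hub
      apply hstv
      have := hiff.1 hub
      simp only [stv]
      cases hb2 : b.2
      · rw [hb2] at this
        simp only [Bool.false_eq_true, if_false] at this ⊢
        rw [Bool.not_eq_true']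
        rw [← Bool.not_eq_true]
        intro hTT
        exact this (hfor.2 hTT)
      · rw [hb2] at this
        simp only [if_true] at this ⊢
        exact hfor.1 this
  · exact fp_nonlive hinj harc hfix (W0_subset hb) hl

lemma fp_LCs_empty {k : Fin n} (hinj : Function.Injective v) (hk : k ∉ Cf v)
    {b : Fin n × Bool} (hb : b ∈ LCs G v s k) : False :=
  hk (Cf_of_LCs hinj hb)

lemma fp_W1bits (hfix : ∀ k, ff G v s x k = x k) {k : Fin n}
    (hforce : ∀ b ∈ InS G k, astar G v s b.1 = (k, b.2) → b.1 ∈ Bad G v →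
      (x b.1 = (lstar G v s b.1 : ℤ) ↔ TT G v s b.1 = true)) :
    ∀ b ∈ W1 G v s k, ubP G v s x k b := by
  intro b hb
  obtain ⟨hbin, hl, hbad, hstv⟩ := mem_W1.1 hb
  have hfor := hforce b hbin hl hbad
  rw [fp_live hfix hbin hl]
  simp only [stv] at hstv
  cases hb2 : b.2
  · rw [hb2] at hstv
    simp only [Bool.false_eq_true, if_false] at hstv ⊢
    rw [Bool.not_eq_true'] at hstv
    intro hc
    rw [hfor.1 hc] at hstv
    exact absurd hstv (by simp)
  · rw [hb2] at hstv
    simp only [if_true] at hstv ⊢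
    exact hfor.2 hstv

end Fixed

section Fixed2

variable {n : ℕ} {G : SDigraph (Fin n)} {m : ℕ} {v : Fin (m+1) → Fin n}
  {s : Fin (m+1) → Bool} {x : Fin n → ℤ}

lemma fp_forced (hinj : Function.Injective v)
    (harc : ∀ t, arcB G (v t) (v (t + 1)) (s t))
    (hfix : ∀ k, ff G v s x k = x k) :
    ∀ μ : ℕ, ∀ p ∈ Bad G v, n + 1 - stage G v p ≤ μ →
      (x p = (lstar G v s p : ℤ) ↔ TT G v s p = true) := by
  intro μ
  induction μ with
  | zero =>
    intro p hp hμ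
    have := stage_le_n (Finset.mem_sdiff.1 hp).1
    omega
  | succ μ ih =>
    intro p hp hμ
    have hpCf : p ∉ Cf v := (Finset.mem_sdiff.1 hp).2
    have hforce : ∀ b ∈ InS G p, astar G v s b.1 = (p, b.2) → b.1 ∈ Bad G v →
        (x b.1 = (lstar G v s b.1 : ℤ) ↔ TT G v s b.1 = true) := by
      intro b hb hl hbad
      have hlt := stage_live_lt hinj harc hbad hl
      exact ih b.1 hbad (by omega)
    have hW0 := fp_W0bits hinj harc hfix (Finset.mem_sdiff.1 hp).1 hforce
    have hW1 := fp_W1bits hfix hforce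
    have h1 : FbP G v s x p ↔ (W1 G v s p).Nonempty := by
      constructor
      · rintro (⟨-, h2, -⟩ | ⟨b, hb, hub⟩)
        · rcases h2 with h2 | h2
          · exact absurd h2 hpCf
          · exact h2
        · exact absurd hub (hW0 b hb)
      · intro hNE
        exact Or.inl ⟨fun b hb => (fp_LCs_empty hinj hpCf hb).elim, Or.inr hNE, hW1⟩
    have h2 : TT G v s p = true ↔ (W1 G v s p).Nonempty := by
      rw [TT_eq hinj harc hp]
      constructor
      · rintro ⟨a, ha, h3, h4, h5⟩
        exact ⟨a, mem_W1.2 ⟨ha, h3, h4, h5⟩⟩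
      · rintro ⟨a, ha⟩
        obtain ⟨h3, h4, h5, h6⟩ := mem_W1.1 ha
        exact ⟨a, h3, h4, h5, h6⟩
    rw [fp_Bp_iff_FbP hfix p, h1, h2]

lemma LCs_cyc (hinj : Function.Injective v)
    (harc : ∀ t, arcB G (v t) (v (t + 1)) (s t)) (t : Fin (m+1))
    {b : Fin n × Bool} : b ∈ LCs G v s (v (t+1)) ↔ b = (v t, s t) := by
  constructor
  · intro hb
    obtain ⟨hin, hlive, hCf⟩ := mem_LCs.1 hb
    obtain ⟨r, -, hr⟩ := Finset.mem_image.1 hCf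
    rw [← hr, astar_cyc hinj] at hlive
    have h1 : v (r + 1) = v (t + 1) := congrArg Prod.fst hlive
    have h2 : s r = b.2 := congrArg Prod.snd hlive
    have h3 : r = t := add_right_cancel (hinj h1)
    have h4 : b = (b.1, b.2) := rfl
    rw [h4, ← hr, ← h2, h3]
  · intro hb
    subst hb
    exact mem_LCs.2 ⟨mem_InS.2 (harc t), astar_cyc hinj t,
      Finset.mem_image.2 ⟨t, Finset.mem_univ _, rfl⟩⟩

lemma fp_cyc (hinj : Function.Injective v)
    (harc : ∀ t, arcB G (v t) (v (t + 1)) (s t))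
    (hfix : ∀ k, ff G v s x k = x k) (t : Fin (m+1)) :
    (x (v (t+1)) = (lstar G v s (v (t+1)) : ℤ)) ↔
      (if s t = true then x (v t) = (lstar G v s (v t) : ℤ)
       else ¬ (x (v t) = (lstar G v s (v t) : ℤ))) := by
  have hkCf : v (t+1) ∈ Cf v := Finset.mem_image.2 ⟨t + 1, Finset.mem_univ _, rfl⟩
  have hforce : ∀ b ∈ InS G (v (t+1)), astar G v s b.1 = (v (t+1), b.2) →
      b.1 ∈ Bad G v → (x b.1 = (lstar G v s b.1 : ℤ) ↔ TT G v s b.1 = true) := by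
    intro b hb hl hbad
    exact fp_forced hinj harc hfix (n + 1) b.1 hbad (by omega)
  have hW0 := fp_W0bits hinj harc hfix (Cf_subset_BB hkCf) hforce
  have hW1 := fp_W1bits hfix hforce
  have hcy : (v t, s t) ∈ LCs G v s (v (t+1)) := (LCs_cyc hinj harc t).2 rfl
  have h1 : FbP G v s x (v (t+1)) ↔ ubP G v s x (v (t+1)) (v t, s t) := by
    constructor
    · rintro (⟨hLC, -, -⟩ | ⟨b, hb, hub⟩)
      · exact hLC _ hcy
      · exact absurd hub (hW0 b hb)
    · intro h
      refine Or.inl ⟨?_, Or.inl hkCf, hW1⟩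
      intro b hb
      rw [LCs_cyc hinj harc t] at hb
      rw [hb]
      exact h
  have hlivearc : astar G v s (v t) = (v (t+1), s t) := astar_cyc hinj t
  have h2 := fp_live (b := (v t, s t)) hfix (LCs_subset hcy) hlivearc
  rw [fp_Bp_iff_FbP hfix (v (t+1)), h1, h2]

open Fin.NatCast in
lemma no_fixed (hinj : Function.Injective v)
    (harc : ∀ t, arcB G (v t) (v (t + 1)) (s t))
    (hodd : SDigraph.negCount s % 2 = 1)
    (hfix : ∀ k, ff G v s x k = x k) : False := by
  set γ : ℕ → ZMod 2 := fun N =>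
    if x (v ((N : ℕ) : Fin (m+1))) = (lstar G v s (v ((N : ℕ) : Fin (m+1))) : ℤ)
    then 1 else 0 with hγ
  have hstep : ∀ N : ℕ, γ (N + 1) = γ N + (if s ((N : ℕ) : Fin (m+1)) then 0 else 1) := by
    intro N
    have hc := fp_cyc hinj harc hfix ((N : ℕ) : Fin (m+1))
    have hcast : ((N + 1 : ℕ) : Fin (m+1)) = ((N : ℕ) : Fin (m+1)) + 1 := by
      push_cast
      ring
    simp only [hγ]
    rw [hcast]
    cases hs : s ((N : ℕ) : Fin (m+1))
    · rw [if_neg (by rw [hs]; simp)] at hc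
      by_cases hB : x (v ((N : ℕ) : Fin (m+1))) = (lstar G v s (v ((N : ℕ) : Fin (m+1))) : ℤ)
      · rw [if_neg (fun hcc => (hc.1 hcc) hB), if_pos hB]
        decide
      · rw [if_pos (hc.2 hB), if_neg hB]
        decide
    · rw [if_pos (by rw [hs])] at hc
      by_cases hB : x (v ((N : ℕ) : Fin (m+1))) = (lstar G v s (v ((N : ℕ) : Fin (m+1))) : ℤ)
      · rw [if_pos (hc.2 hB), if_pos hB]
        decide
      · rw [if_neg (fun hcc => hB (hc.1 hcc)), if_neg hB]
        decide
  have hiter : ∀ N : ℕ, γ N = γ 0 + ∑ r ∈ Finset.range N,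
      (if s ((r : ℕ) : Fin (m+1)) then (0 : ZMod 2) else 1) := by
    intro N
    induction N with
    | zero => simp
    | succ N ih =>
      rw [Finset.sum_range_succ, hstep N, ih]
      ring
  have hwrap : γ (m + 1) = γ 0 := by
    simp only [hγ]
    have h0 : ((m + 1 : ℕ) : Fin (m+1)) = ((0 : ℕ) : Fin (m+1)) := by
      rw [Fin.natCast_self]
      simp
    rw [h0]
  have hsum0 : ∑ r ∈ Finset.range (m + 1),
      (if s ((r : ℕ) : Fin (m+1)) then (0 : ZMod 2) else 1) = 0 := by
    have h1 := hiter (m + 1)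
    rw [hwrap] at h1
    exact (left_eq_add.1 h1)
  have hsum' : ∑ t : Fin (m+1), (if s t then (0 : ZMod 2) else 1) = 0 := by
    have he : ∑ t : Fin (m+1), (if s t then (0 : ZMod 2) else 1)
        = ∑ r ∈ Finset.range (m + 1),
            (if s ((r : ℕ) : Fin (m+1)) then (0 : ZMod 2) else 1) := by
      rw [← Fin.sum_univ_eq_sum_range
        (fun r => if s ((r : ℕ) : Fin (m+1)) then (0 : ZMod 2) else 1) (m+1)]
      apply Finset.sum_congr rfl
      intro t _
      have ht : (((t : ℕ) : Fin (m+1))) = t := Fin.cast_val_eq_self t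
      rw [ht]
    rw [he, hsum0]
  have hcnt : ∑ t : Fin (m+1), (if s t then (0 : ZMod 2) else 1) =
      ((SDigraph.negCount s : ℕ) : ZMod 2) := by
    have hpt : ∀ t : Fin (m+1), (if s t then (0 : ZMod 2) else 1) =
        (if s t = false then (1 : ZMod 2) else 0) := by
      intro t
      cases hs : s t <;> simp
    rw [Finset.sum_congr rfl (fun t _ => hpt t)]
    rw [Finset.sum_boole]
    rw [SDigraph.negCount]
  rw [hcnt] at hsum'
  have hdvd : (2 : ℕ) ∣ SDigraph.negCount s :=
    (ZMod.natCast_eq_zero_iff _ 2).1 hsum'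
  omega

end Fixed2

section Assemble

variable {n : ℕ} {G : SDigraph (Fin n)} {m : ℕ} {v : Fin (m+1) → Fin n}
  {s : Fin (m+1) → Bool}

lemma arcB_true {j k : Fin n} : arcB G j k true ↔ G.pos j k = true := by
  rw [arcB]
  simp

lemma arcB_false {j k : Fin n} : arcB G j k false ↔ G.neg j k = true := by
  rw [arcB]
  simp

lemma exist_incident (hconn : SDigraph.Connected G)
    (harc : ∀ t, arcB G (v t) (v (t + 1)) (s t)) (i : Fin n) :
    0 < deg G i ∨ 0 < G.indeg i := by
  by_cases h0 : i = v 0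
  · left
    apply deg_pos_of_out (a := (v (0 + 1), s 0))
    rw [h0]
    exact mem_OutS.2 (harc 0)
  · have hcc := hconn i (v 0)
    rcases (Relation.ReflTransGen.cases_head hcc) with he | ⟨c, hw, -⟩
    · exact absurd he h0
    · rcases hw with harc1 | harc1
      · left
        rcases harc1 with hp | hp
        · exact deg_pos_of_out (a := (c, true)) (mem_OutS.2 (arcB_true.2 hp))
        · exact deg_pos_of_out (a := (c, false)) (mem_OutS.2 (arcB_false.2 hp))
      · right
        rcases harc1 with hp | hp
        · exact indeg_pos (a := (c, true)) (mem_InS.2 (arcB_true.2 hp))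
        · exact indeg_pos (a := (c, false)) (mem_InS.2 (arcB_false.2 hp))

lemma card_Xs {i : Fin n} : (Xs G i).card = max 1 (deg G i) + 1 := by
  rw [Xs, Int.card_Icc]
  push_cast
  omega

/-- the FDS realizing `stmt3` -/
noncomputable def theFDS (G : SDigraph (Fin n)) {m : ℕ} (v : Fin (m+1) → Fin n)
    (s : Fin (m+1) → Bool) (hinj : Function.Injective v)
    (harc : ∀ t, arcB G (v t) (v (t + 1)) (s t)) : FDS (Fin n) where
  X := Xs G
  nonempty := by
    intro i
    refine ⟨0, ?_⟩
    rw [mem_Xs]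
    constructor
    · omega
    · positivity
  interval := by
    intro i a ha b hb c hac hcb
    rw [mem_Xs] at *
    exact ⟨le_trans ha.1 hac, le_trans hcb hb.2⟩
  f := ff G v s
  maps := by
    intro x _ i
    rw [ff, mem_Xs]
    have h1 := one_le_lstar (G := G) (v := v) (s := s) (j := i)
    have h2 := lstar_le hinj harc (j := i)
    split_ifs <;> constructor <;> push_cast <;> omega

theorem stmt3_aux (hconn : SDigraph.Connected G) (hinj : Function.Injective v)
    (harc : ∀ t, arcB G (v t) (v (t + 1)) (s t))
    (hodd : SDigraph.negCount s % 2 = 1) :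
    ∃ F : FDS (Fin n), F.onGraph G ∧ F.degreeBounded G ∧ ∀ x, ¬ F.IsFixed x := by
  refine ⟨theFDS G v s hinj harc, ⟨?_, ?_⟩, ?_, ?_⟩
  · intro j i
    constructor
    · intro hp
      obtain ⟨x, hm, hx1, hlt⟩ := realize hinj harc (σ := true) (arcB_true.2 hp)
      rw [if_pos rfl] at hlt
      exact ⟨x, hm, hx1, hlt⟩
    · rintro ⟨x, hm, hx1, hlt⟩
      exact arcB_true.1 (incr_pos hlt)
  · intro j i
    constructor
    · intro hp
      obtain ⟨x, hm, hx1, hlt⟩ := realize hinj harc (σ := false) (arcB_false.2 hp)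
      rw [if_neg (by simp)] at hlt
      exact ⟨x, hm, hx1, hlt⟩
    · rintro ⟨x, hm, hx1, hlt⟩
      exact arcB_false.1 (decr_neg hlt)
  · intro i
    constructor
    · rintro ⟨hd0, -⟩
      rw [outdeg_eq] at hd0
      show (Xs G i).card = 2
      rw [card_Xs, hd0]
      omega
    · intro hcl
      show (Xs G i).card ≤ G.outdeg i + 1
      rw [card_Xs, outdeg_eq]
      rcases Nat.eq_zero_or_pos (deg G i) with hd | hd
      · exfalso
        apply hcl
        rw [outdeg_eq, hd]
        rcases exist_incident hconn harc i with h | h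
        · omega
        · exact ⟨rfl, h⟩
      · omega
  · rintro x ⟨-, hfx⟩
    exact no_fixed hinj harc hodd (fun k => congrFun hfx k)

end Assemble

end Stmt3

/-- If `G` is connected and has a negative cycle, then some
degree-bounded FDS on `G` has no fixed point. -/
theorem stmt3 (n : ℕ) (G : SDigraph (Fin n)) (hconn : SDigraph.Connected G)
    (hneg : SDigraph.HasNegativeCycle G) :
    ∃ F : FDS (Fin n), F.onGraph G ∧ F.degreeBounded G ∧ ∀ x, ¬ F.IsFixed x := by
  obtain ⟨m, v, s, ⟨hinj, hsc⟩, hodd⟩ := hneg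
  have harc : ∀ t, Stmt3.arcB G (v t) (v (t + 1)) (s t) := hsc
  exact Stmt3.stmt3_aux hconn hinj harc hodd
end

section
/- If G is a connected signed digraph containing k pairwise vertex-disjoint positive cycles (k ≥ 1), then there exists a degree-bounded finite dynamical system on G with at least 2^k fixed points. -/
open scoped Classical

set_option maxHeartbeats 1000000 in
/-- Bundled hypotheses of Statement 5. -/
structure Stmt5Setup (n k : ℕ) where
  G : SDigraph (Fin n)
  hk : 1 ≤ k
  m : Fin k → ℕ
  v : ∀ l, Fin (m l + 1) → Fin n
  s : ∀ l, Fin (m l + 1) → Bool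
  hconn : SDigraph.Connected G
  hcyc : ∀ l, SDigraph.IsSignedCycleOn G (m l) (v l) (s l)
  hpos : ∀ l, SDigraph.negCount (s l) % 2 = 0
  hdisj : ∀ l l', l ≠ l' → ∀ t t', v l t ≠ v l' t'

namespace Stmt5Setup

variable {n k : ℕ} (S : Stmt5Setup n k)

/-! ### Basic degree notions -/

noncomputable def d (j : Fin n) : ℕ := S.G.outdeg j
noncomputable def ind (j : Fin n) : ℕ := S.G.indeg j
noncomputable def mb (j : Fin n) : ℕ :=
  if S.d j = 0 then (if S.ind j = 0 then 0 else 1) else S.d j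
noncomputable def XI (j : Fin n) : Finset ℤ := Finset.Icc 0 (S.mb j)

lemma arc_d_pos {z w : Fin n} (h : S.G.arc z w) : 0 < S.d z := by
  rcases h with h | h
  · have : w ∈ Finset.univ.filter fun j => S.G.neg z j = true ∨ True := by simp
    have hm : w ∈ Finset.univ.filter fun j => S.G.pos z j = true := by simp [h]
    have := Finset.card_pos.mpr ⟨w, hm⟩
    unfold d SDigraph.outdeg; omega
  · have hm : w ∈ Finset.univ.filter fun j => S.G.neg z j = true := by simp [h]
    have := Finset.card_pos.mpr ⟨w, hm⟩
    unfold d SDigraph.outdeg; omega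

lemma arc_ind_pos {z w : Fin n} (h : S.G.arc z w) : 0 < S.ind w := by
  rcases h with h | h
  · have hm : z ∈ Finset.univ.filter fun j => S.G.pos j w = true := by simp [h]
    have := Finset.card_pos.mpr ⟨z, hm⟩
    unfold ind SDigraph.indeg; omega
  · have hm : z ∈ Finset.univ.filter fun j => S.G.neg j w = true := by simp [h]
    have := Finset.card_pos.mpr ⟨z, hm⟩
    unfold ind SDigraph.indeg; omega

lemma mb_eq_d {j : Fin n} (h : 0 < S.d j) : S.mb j = S.d j := by
  unfold mb; rw [if_neg (by omega)]

lemma mb_pos_of_ind {j : Fin n} (h : 0 < S.ind j) : 1 ≤ S.mb j := by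
  unfold mb; split
  · rw [if_neg (by omega)]
  · omega

lemma mb_pos_of_d {j : Fin n} (h : 0 < S.d j) : 1 ≤ S.mb j := by
  rw [S.mb_eq_d h]; omega

/-- counting helper: disjointly many targets bound the outdegree from below. -/
lemma card_le_d (z : Fin n) (P N : Finset (Fin n))
    (hP : ∀ w ∈ P, S.G.pos z w = true) (hN : ∀ w ∈ N, S.G.neg z w = true) :
    P.card + N.card ≤ S.d z := by
  unfold d SDigraph.outdeg
  have h1 : P ⊆ Finset.univ.filter fun j => S.G.pos z j = true := by
    intro w hw; simp [hP w hw]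
  have h2 : N ⊆ Finset.univ.filter fun j => S.G.neg z j = true := by
    intro w hw; simp [hN w hw]
  exact Nat.add_le_add (Finset.card_le_card h1) (Finset.card_le_card h2)

lemma d1_unique {z w w' : Fin n} (h : S.d z = 1)
    (h1 : S.G.arc z w) (h2 : S.G.arc z w') : w = w' := by
  by_contra hne
  have : 2 ≤ S.d z := by
    rcases h1 with a1 | a1 <;> rcases h2 with a2 | a2
    · have := S.card_le_d z {w, w'} ∅ (by intro x hx; simp at hx; rcases hx with rfl | rfl <;> assumption) (by simp)
      simpa [Finset.card_insert_of_notMem, hne] using this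
    · have := S.card_le_d z {w} {w'} (by intro x hx; simp at hx; subst hx; assumption) (by intro x hx; simp at hx; subst hx; assumption)
      simpa using this
    · have := S.card_le_d z {w'} {w} (by intro x hx; simp at hx; subst hx; assumption) (by intro x hx; simp at hx; subst hx; assumption)
      simpa using this
    · have := S.card_le_d z ∅ {w, w'} (by simp) (by intro x hx; simp at hx; rcases hx with rfl | rfl <;> assumption)
      simpa [Finset.card_insert_of_notMem, hne] using this
  omega

lemma d1_sign {z w : Fin n} (h : S.d z = 1) (h1 : S.G.pos z w = true) :
    ∀ i, S.G.neg z i = false := by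
  intro i
  by_contra hne
  have hne' : S.G.neg z i = true := by simpa using hne
  have := S.card_le_d z {w} {i} (by intro x hx; simp at hx; subst hx; assumption)
    (by intro x hx; simp at hx; subst hx; assumption)
  simp at this; omega

lemma d1_sign' {z w : Fin n} (h : S.d z = 1) (h1 : S.G.neg z w = true) :
    ∀ i, S.G.pos z i = false := by
  intro i
  by_contra hne
  have hne' : S.G.pos z i = true := by simpa using hne
  have := S.card_le_d z {i} {w} (by intro x hx; simp at hx; subst hx; assumption)
    (by intro x hx; simp at hx; subst hx; assumption)
  simp at this; omega

/-! ### Cycle data -/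

def inC (x : Fin n) : Prop := ∃ l a, S.v l a = x

noncomputable def cyd (x : Fin n) : Σ l : Fin k, Fin (S.m l + 1) :=
  if h : S.inC x then ⟨h.choose, h.choose_spec.choose⟩ else ⟨⟨0, S.hk⟩, 0⟩

lemma v_inj {l l' : Fin k} {a : Fin (S.m l + 1)} {a' : Fin (S.m l' + 1)}
    (h : S.v l a = S.v l' a') : l = l' := by
  by_contra hne
  exact S.hdisj l l' hne a a' h

lemma v_inj_sigma {l l' : Fin k} {a : Fin (S.m l + 1)} {a' : Fin (S.m l' + 1)}
    (h : S.v l a = S.v l' a') : (⟨l, a⟩ : Σ l, Fin (S.m l + 1)) = ⟨l', a'⟩ := by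
  have hl : l = l' := S.v_inj h
  subst hl
  exact congrArg _ ((S.hcyc l).1 h)

lemma cyd_spec {l : Fin k} {a : Fin (S.m l + 1)} : S.cyd (S.v l a) = ⟨l, a⟩ := by
  unfold cyd
  rw [dif_pos ⟨l, a, rfl⟩]
  exact S.v_inj_sigma (Exists.choose_spec (Exists.choose_spec (⟨l, a, rfl⟩ : S.inC (S.v l a))))

lemma cyd_self {x : Fin n} (h : S.inC x) : S.v (S.cyd x).1 (S.cyd x).2 = x := by
  obtain ⟨l, a, rfl⟩ := h
  exact congrArg (fun p : (Σ l : Fin k, Fin (S.m l + 1)) => S.v p.1 p.2) S.cyd_spec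

noncomputable def pred (x : Fin n) : Fin n := S.v (S.cyd x).1 ((S.cyd x).2 - 1)
noncomputable def psign (x : Fin n) : Bool := S.s (S.cyd x).1 ((S.cyd x).2 - 1)
noncomputable def succV (x : Fin n) : Fin n := S.v (S.cyd x).1 ((S.cyd x).2 + 1)

lemma pred_v {l : Fin k} {a : Fin (S.m l + 1)} : S.pred (S.v l a) = S.v l (a - 1) := by
  exact congrArg (fun p : (Σ l : Fin k, Fin (S.m l + 1)) => S.v p.1 (p.2 - 1)) S.cyd_spec

lemma psign_v {l : Fin k} {a : Fin (S.m l + 1)} : S.psign (S.v l a) = S.s l (a - 1) := by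
  exact congrArg (fun p : (Σ l : Fin k, Fin (S.m l + 1)) => S.s p.1 (p.2 - 1)) S.cyd_spec

lemma succV_v {l : Fin k} {a : Fin (S.m l + 1)} : S.succV (S.v l a) = S.v l (a + 1) := by
  exact congrArg (fun p : (Σ l : Fin k, Fin (S.m l + 1)) => S.v p.1 (p.2 + 1)) S.cyd_spec

lemma pred_inC {x : Fin n} : S.inC (S.pred x) := ⟨_, _, rfl⟩

lemma succV_inC {x : Fin n} : S.inC (S.succV x) := ⟨_, _, rfl⟩

lemma pred_succV {x : Fin n} (h : S.inC x) : S.pred (S.succV x) = x := by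
  obtain ⟨l, a, rfl⟩ := h
  rw [S.succV_v, S.pred_v, add_sub_cancel_right]

lemma succV_pred {x : Fin n} (h : S.inC x) : S.succV (S.pred x) = x := by
  obtain ⟨l, a, rfl⟩ := h
  rw [S.pred_v, S.succV_v, sub_add_cancel]

/-- the declared arc of the cycle into a cycle vertex. -/
lemma pred_arc {x : Fin n} (h : S.inC x) :
    if S.psign x then S.G.pos (S.pred x) x = true else S.G.neg (S.pred x) x = true := by
  obtain ⟨l, a, rfl⟩ := h
  rw [S.pred_v, S.psign_v]
  have := (S.hcyc l).2 (a - 1)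
  rwa [sub_add_cancel] at this

lemma pred_arc' {x : Fin n} (h : S.inC x) : S.G.arc (S.pred x) x := by
  have := S.pred_arc h
  split at this
  · exact Or.inl this
  · exact Or.inr this

/-- the declared arc out of a cycle vertex. -/
lemma succ_arc' {x : Fin n} (h : S.inC x) : S.G.arc x (S.succV x) := by
  have h2 := S.pred_arc (S.succV_inC (x := x))
  rw [S.pred_succV h] at h2
  split at h2
  · exact Or.inl h2
  · exact Or.inr h2

end Stmt5Setup
namespace Stmt5Setup

variable {n k : ℕ} (S : Stmt5Setup n k)

/-! ### The combinatorial core -/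

def Dv (z : Fin n) : Prop := ¬S.inC z ∧ 0 < S.ind z ∧ S.d z = 1

noncomputable def negS (z : Fin n) : Bool := decide (∃ i, S.G.neg z i = true)

def Jv (j : Fin n) : Prop := ¬S.inC j ∧ 0 < S.ind j ∧ ∀ z, S.G.arc z j → S.Dv z

lemma exists_in_arc {j : Fin n} (h : 0 < S.ind j) : ∃ z, S.G.arc z j := by
  unfold ind SDigraph.indeg at h
  rcases Nat.lt_or_ge 0 (Finset.univ.filter fun z => S.G.pos z j = true).card with h1 | h1
  · obtain ⟨z, hz⟩ := Finset.card_pos.mp h1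
    simp only [Finset.mem_filter] at hz
    exact ⟨z, Or.inl hz.2⟩
  · have h2 : 0 < (Finset.univ.filter fun z => S.G.neg z j = true).card := by omega
    obtain ⟨z, hz⟩ := Finset.card_pos.mp h2
    simp only [Finset.mem_filter] at hz
    exact ⟨z, Or.inr hz.2⟩

noncomputable def Sq : ℕ → Finset (Fin n)
  | 0 => Finset.univ.filter (fun j => ¬ S.Jv j)
  | (q+1) => Sq q ∪ Finset.univ.filter (fun j => ∃ z, S.G.arc z j ∧ S.Dv z ∧ z ∈ Sq q)

lemma Sq_total : ∀ j, ∃ q, j ∈ S.Sq q := by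
  by_contra hc
  push_neg at hc
  obtain ⟨j₀, hj₀⟩ := hc
  set N : Finset (Fin n) := Finset.univ.filter (fun j => ∀ q, j ∉ S.Sq q) with hNdef
  have hN0 : j₀ ∈ N := by simp [hNdef, hj₀]
  have hJ : ∀ j ∈ N, S.Jv j := by
    intro j hj
    by_contra hnj
    have : j ∈ S.Sq 0 := by simp [Sq, hnj]
    simp [hNdef] at hj
    exact hj 0 this
  have hIn : ∀ j ∈ N, ∀ z, S.G.arc z j → z ∈ N ∧ S.Dv z := by
    intro j hj z hz
    refine ⟨?_, (hJ j hj).2.2 z hz⟩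
    by_contra hzN
    simp [hNdef] at hzN
    obtain ⟨q, hq⟩ := hzN
    have : j ∈ S.Sq (q + 1) := by
      simp [Sq]
      exact Or.inr ⟨z, hz, (hJ j hj).2.2 z hz, hq⟩
    simp [hNdef] at hj
    exact hj (q+1) this
  -- each vertex of N has an in-neighbour inside N ∩ D; pick one
  set ψ : Fin n → Fin n := fun j =>
    if h : ∃ z, S.G.arc z j ∧ z ∈ N ∧ S.Dv z then h.choose else j with hψdef
  have hψ : ∀ j ∈ N, S.G.arc (ψ j) j ∧ ψ j ∈ N ∧ S.Dv (ψ j) := by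
    intro j hj
    have hex : ∃ z, S.G.arc z j ∧ z ∈ N ∧ S.Dv z := by
      obtain ⟨z, hz⟩ := S.exists_in_arc (hJ j hj).2.1
      obtain ⟨h1, h2⟩ := hIn j hj z hz
      exact ⟨z, hz, h1, h2⟩
    rw [hψdef]; simp only [dif_pos hex]
    exact hex.choose_spec
  have hinj : Set.InjOn ψ N := by
    intro j1 h1 j2 h2 he
    obtain ⟨a1, _, _⟩ := hψ j1 h1
    obtain ⟨a2, _, d2⟩ := hψ j2 h2
    rw [he] at a1
    exact S.d1_unique d2.2.2 a1 a2
  have himg : N.image ψ = N := by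
    apply Finset.eq_of_subset_of_card_le
    · intro z hz
      simp only [Finset.mem_image] at hz
      obtain ⟨j, hj, rfl⟩ := hz
      exact (hψ j hj).2.1
    · rw [Finset.card_image_of_injOn hinj]
  have hOut : ∀ z ∈ N, ∀ w, S.G.arc z w → w ∈ N := by
    intro z hz w hw
    rw [← himg] at hz
    simp only [Finset.mem_image] at hz
    obtain ⟨j, hj, rfl⟩ := hz
    obtain ⟨a1, _, d1⟩ := hψ j hj
    rwa [S.d1_unique d1.2.2 hw a1]
  -- connectivity contradiction
  set c₀ : Fin n := S.v ⟨0, S.hk⟩ 0 with hc₀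
  have hc₀N : c₀ ∉ N := by
    intro hmem
    exact (hJ c₀ hmem).1 ⟨_, _, rfl⟩
  have key : ∀ b, Relation.ReflTransGen (SDigraph.wconnRel S.G) c₀ b → b ∉ N := by
    intro b hb
    induction hb with
    | refl => exact hc₀N
    | tail _ hr ih =>
      rename_i b' b'' _
      intro hbN
      rcases hr with harc | harc
      · exact ih (hIn b'' hbN b' harc).1
      · exact ih (hOut b'' hbN b' harc)
  exact key j₀ (S.hconn c₀ j₀) hN0

noncomputable def rank (j : Fin n) : ℕ := Nat.find (S.Sq_total j)

lemma rank_mem (j : Fin n) : j ∈ S.Sq (S.rank j) := Nat.find_spec (S.Sq_total j)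

lemma rank_min {j : Fin n} {q : ℕ} (h : q < S.rank j) : j ∉ S.Sq q :=
  Nat.find_min (S.Sq_total j) h

lemma rank_le {j : Fin n} {q : ℕ} (h : j ∈ S.Sq q) : S.rank j ≤ q :=
  Nat.find_le h

lemma pick_ex {j : Fin n} (h : S.Jv j) :
    ∃ z, S.G.arc z j ∧ S.Dv z ∧ S.rank z < S.rank j := by
  have h0 : j ∉ S.Sq 0 := by simp [Sq, h]
  have hr0 : 0 < S.rank j := by
    rcases Nat.eq_zero_or_pos (S.rank j) with he | he
    · exact absurd (he ▸ S.rank_mem j) h0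
    · exact he
  obtain ⟨q, hq⟩ := Nat.exists_eq_succ_of_ne_zero (by omega : S.rank j ≠ 0)
  have hmem := S.rank_mem j
  rw [hq] at hmem
  have hnot : j ∉ S.Sq q := S.rank_min (by omega)
  simp only [Sq, Finset.mem_union, Finset.mem_filter, Finset.mem_univ, true_and] at hmem
  rcases hmem with hmem | hmem
  · exact absurd hmem hnot
  · obtain ⟨z, h1, h2, h3⟩ := hmem
    exact ⟨z, h1, h2, by have := S.rank_le h3; omega⟩

noncomputable def pick (j : Fin n) : Fin n :=
  if h : ∃ z, S.G.arc z j ∧ S.Dv z ∧ S.rank z < S.rank j then h.choose else j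

lemma pick_spec {j : Fin n} (h : S.Jv j) :
    S.G.arc (S.pick j) j ∧ S.Dv (S.pick j) ∧ S.rank (S.pick j) < S.rank j := by
  unfold pick
  rw [dif_pos (S.pick_ex h)]
  exact (S.pick_ex h).choose_spec

noncomputable def vAux : ℕ → Fin n → Bool
  | 0, _ => false
  | (q+1), j => if S.Jv j then xor (vAux q (S.pick j)) (S.negS (S.pick j)) else false

noncomputable def vB (j : Fin n) : Bool := S.vAux (S.rank j + 1) j

lemma vAux_stab : ∀ r j, S.rank j ≤ r → ∀ q, S.rank j < q → S.vAux q j = S.vB j := by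
  intro r
  induction r with
  | zero =>
    intro j hr q hq
    have hr0 : S.rank j = 0 := by omega
    have hnJ : ¬ S.Jv j := by
      have := S.rank_mem j
      rw [hr0] at this
      simpa [Sq] using this
    obtain ⟨q', rfl⟩ := Nat.exists_eq_succ_of_ne_zero (by omega : q ≠ 0)
    simp [vB, vAux, hnJ, hr0]
  | succ r ih =>
    intro j hr q hq
    rcases Nat.lt_or_ge (S.rank j) (r+1) with hlt | hge
    · exact ih j (by omega) q hq
    · have hrj : S.rank j = r + 1 := by omega
      by_cases hJ : S.Jv j
      · obtain ⟨q', rfl⟩ := Nat.exists_eq_succ_of_ne_zero (by omega : q ≠ 0)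
        have hpk := (S.pick_spec hJ).2.2
        have h1 : S.vAux q' (S.pick j) = S.vB (S.pick j) :=
          ih (S.pick j) (by omega) q' (by omega)
        have h2 : S.vAux (S.rank j) (S.pick j) = S.vB (S.pick j) :=
          ih (S.pick j) (by omega) (S.rank j) (by omega)
        show (if S.Jv j then xor (S.vAux q' (S.pick j)) (S.negS (S.pick j)) else false) = S.vB j
        rw [if_pos hJ, h1]
        have hstep : S.vB j
            = if S.Jv j then xor (S.vAux (S.rank j) (S.pick j)) (S.negS (S.pick j)) else false := rfl
        rw [hstep, if_pos hJ, h2]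
      · obtain ⟨q', rfl⟩ := Nat.exists_eq_succ_of_ne_zero (by omega : q ≠ 0)
        simp [vB, vAux, hJ]

lemma vB_J {j : Fin n} (h : S.Jv j) :
    S.vB j = xor (S.vB (S.pick j)) (S.negS (S.pick j)) := by
  have hpk := S.pick_spec h
  have hstep : S.vB j
      = if S.Jv j then xor (S.vAux (S.rank j) (S.pick j)) (S.negS (S.pick j)) else false := rfl
  rw [hstep, if_pos h,
    S.vAux_stab (S.rank (S.pick j)) (S.pick j) le_rfl (S.rank j) hpk.2.2]

noncomputable def pinOf (i : Fin n) : Fin n :=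
  if h : ∃ z, S.G.arc z i ∧ ¬ S.Dv z then h.choose else S.pick i

noncomputable def piv (z i : Fin n) : Bool :=
  if S.Dv z then xor (S.vB z) (S.negS z)
  else if S.pinOf i = z ∧ ¬S.inC i ∧ 0 < S.ind i then S.vB i else true

lemma piv_D {z : Fin n} (h : S.Dv z) (i : Fin n) :
    S.piv z i = xor (S.vB z) (S.negS z) := by
  simp [piv, h]

lemma pin_lemma {i : Fin n} (hC : ¬S.inC i) (hi : 0 < S.ind i) :
    ∃ z, S.G.arc z i ∧ S.piv z i = S.vB i := by
  by_cases hJ : S.Jv i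
  · refine ⟨S.pick i, (S.pick_spec hJ).1, ?_⟩
    rw [S.piv_D (S.pick_spec hJ).2.1]
    exact (S.vB_J hJ).symm
  · have hex : ∃ z, S.G.arc z i ∧ ¬ S.Dv z := by
      by_contra hno
      push_neg at hno
      exact hJ ⟨hC, hi, hno⟩
    refine ⟨S.pinOf i, ?_, ?_⟩
    · unfold pinOf
      rw [dif_pos hex]
      exact hex.choose_spec.1
    · have hnd : ¬ S.Dv (S.pinOf i) := by
        unfold pinOf
        rw [dif_pos hex]
        exact hex.choose_spec.2
      simp [piv, hnd, hC, hi]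

end Stmt5Setup
namespace Stmt5Setup

variable {n k : ℕ} (S : Stmt5Setup n k)

/-! ### Arc classes and numeric parameters -/

def sPos (z w : Fin n) : Prop := S.G.pos z w = true ∧ S.G.neg z w = false
def sNeg (z w : Fin n) : Prop := S.G.pos z w = false ∧ S.G.neg z w = true
def sPair (z w : Fin n) : Prop := S.G.pos z w = true ∧ S.G.neg z w = true
def isSucc (z w : Fin n) : Prop := S.inC w ∧ z = S.pred w
def gen (z w : Fin n) : Prop := S.G.arc z w ∧ ¬ S.isSucc z w
def succPair (z : Fin n) : Prop := S.inC z ∧ S.sPair z (S.succV z)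

lemma arc_cases {z w : Fin n} (h : S.G.arc z w) :
    S.sPos z w ∨ S.sNeg z w ∨ S.sPair z w := by
  rcases h with h | h
  · by_cases hn : S.G.neg z w = true
    · exact Or.inr (Or.inr ⟨h, hn⟩)
    · exact Or.inl ⟨h, by simpa using hn⟩
  · by_cases hp : S.G.pos z w = true
    · exact Or.inr (Or.inr ⟨hp, h⟩)
    · exact Or.inr (Or.inl ⟨by simpa using hp, h⟩)

lemma isSucc_self_succ {z : Fin n} (h : S.inC z) : S.isSucc z (S.succV z) :=
  ⟨S.succV_inC, (S.pred_succV h).symm⟩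

lemma gen_ne_succ {z w : Fin n} (hz : S.inC z) (h : S.gen z w) : w ≠ S.succV z := by
  intro he
  exact h.2 (he ▸ S.isSucc_self_succ hz)

/-- more counting lemmas -/
lemma two_arcs {z w w' : Fin n} (h1 : S.G.arc z w) (h2 : S.G.arc z w') (hne : w ≠ w') :
    2 ≤ S.d z := by
  rcases h1 with a1 | a1 <;> rcases h2 with a2 | a2
  · have := S.card_le_d z {w, w'} ∅ (by intro x hx; simp at hx; rcases hx with rfl | rfl <;> assumption) (by simp)
    simpa [Finset.card_insert_of_notMem, hne] using this
  · have := S.card_le_d z {w} {w'} (by intro x hx; simp at hx; subst hx; assumption) (by intro x hx; simp at hx; subst hx; assumption)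
    simpa using this
  · have := S.card_le_d z {w'} {w} (by intro x hx; simp at hx; subst hx; assumption) (by intro x hx; simp at hx; subst hx; assumption)
    simpa using this
  · have := S.card_le_d z ∅ {w, w'} (by simp) (by intro x hx; simp at hx; rcases hx with rfl | rfl <;> assumption)
    simpa [Finset.card_insert_of_notMem, hne] using this

lemma pair_d2 {z w : Fin n} (h : S.sPair z w) : 2 ≤ S.d z := by
  have := S.card_le_d z {w} {w} (by intro x hx; simp at hx; subst hx; exact h.1)
    (by intro x hx; simp at hx; subst hx; exact h.2)
  simpa using this

lemma pair_plus {z w a : Fin n} (h : S.sPair z w) (h2 : S.G.arc z a) (hne : a ≠ w) :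
    3 ≤ S.d z := by
  rcases h2 with a2 | a2
  · have := S.card_le_d z {w, a} {w}
      (by intro x hx; simp at hx; rcases hx with rfl | rfl; exacts [h.1, a2])
      (by intro x hx; simp at hx; subst hx; exact h.2)
    simp [Finset.card_insert_of_notMem, Ne.symm hne] at this; omega
  · have := S.card_le_d z {w} {w, a}
      (by intro x hx; simp at hx; subst hx; exact h.1)
      (by intro x hx; simp at hx; rcases hx with rfl | rfl; exacts [h.2, a2])
    simp [Finset.card_insert_of_notMem, Ne.symm hne] at this; omega

lemma pair_plus2 {z w a b : Fin n} (h : S.sPair z w) (h2 : S.G.arc z a) (h3 : S.G.arc z b)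
    (hab : a ≠ b) (haw : a ≠ w) (hbw : b ≠ w) : 4 ≤ S.d z := by
  rcases h2 with a2 | a2 <;> rcases h3 with a3 | a3
  · have := S.card_le_d z {w, a, b} {w}
      (by intro x hx; simp at hx; rcases hx with rfl | rfl | rfl; exacts [h.1, a2, a3])
      (by intro x hx; simp at hx; subst hx; exact h.2)
    rw [Finset.card_insert_of_notMem (by simp [Ne.symm haw, Ne.symm hbw]),
      Finset.card_insert_of_notMem (by simp [hab])] at this
    simp at this; omega
  · have := S.card_le_d z {w, a} {w, b}
      (by intro x hx; simp at hx; rcases hx with rfl | rfl; exacts [h.1, a2])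
      (by intro x hx; simp at hx; rcases hx with rfl | rfl; exacts [h.2, a3])
    rw [Finset.card_insert_of_notMem (by simp [Ne.symm haw]),
      Finset.card_insert_of_notMem (by simp [Ne.symm hbw])] at this
    simp at this; omega
  · have := S.card_le_d z {w, b} {w, a}
      (by intro x hx; simp at hx; rcases hx with rfl | rfl; exacts [h.1, a3])
      (by intro x hx; simp at hx; rcases hx with rfl | rfl; exacts [h.2, a2])
    rw [Finset.card_insert_of_notMem (by simp [Ne.symm hbw]),
      Finset.card_insert_of_notMem (by simp [Ne.symm haw])] at this
    simp at this; omega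
  · have := S.card_le_d z {w} {w, a, b}
      (by intro x hx; simp at hx; subst hx; exact h.1)
      (by intro x hx; simp at hx; rcases hx with rfl | rfl | rfl; exacts [h.2, a2, a3])
    rw [Finset.card_insert_of_notMem (by simp [Ne.symm haw, Ne.symm hbw]),
      Finset.card_insert_of_notMem (by simp [hab])] at this
    simp at this; omega

lemma two_pairs {z w a : Fin n} (h : S.sPair z w) (h2 : S.sPair z a) (hne : w ≠ a) :
    4 ≤ S.d z := by
  have := S.card_le_d z {w, a} {w, a}
    (by intro x hx; simp at hx; rcases hx with rfl | rfl; exacts [h.1, h2.1])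
    (by intro x hx; simp at hx; rcases hx with rfl | rfl; exacts [h.2, h2.2])
  rw [Finset.card_insert_of_notMem (by simp [hne])] at this
  simp at this; omega

/-! ### needLo / needHi and the numeric parameters -/

def needLo (z : Fin n) : Prop :=
  (¬S.inC z ∧ 0 < S.ind z ∧ S.vB z = true) ∨
  ∃ w, S.gen z w ∧ ((S.sPos z w ∧ S.piv z w = true) ∨ (S.sNeg z w ∧ S.piv z w = false))

def needHi (z : Fin n) : Prop :=
  (¬S.inC z ∧ 0 < S.ind z ∧ S.vB z = false) ∨
  ∃ w, S.gen z w ∧ ((S.sPos z w ∧ S.piv z w = false) ∨ (S.sNeg z w ∧ S.piv z w = true))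

noncomputable def tB (z : Fin n) : ℤ :=
  if S.needHi z then (if S.needLo z then 1 else 0)
  else (if S.needLo z then (S.mb z : ℤ) else 0)

noncomputable def loB (z : Fin n) : ℤ := if S.needLo z ∨ S.succPair z then 1 else 0

noncomputable def rlo (z : Fin n) : ℤ := if S.inC z then S.loB z else S.tB z
noncomputable def rhi (z : Fin n) : ℤ := if S.inC z then S.loB z + 1 else S.tB z

noncomputable def cB (z : Fin n) : ℤ :=
  if S.inC z then (if S.loB z = 1 then 3 else 2) else (if S.tB z = 1 then 2 else 1)

lemma needLo_mb {z : Fin n} (h : S.needLo z) : 1 ≤ S.mb z := by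
  rcases h with ⟨_, h, _⟩ | ⟨w, hw, _⟩
  · exact S.mb_pos_of_ind h
  · exact S.mb_pos_of_d (S.arc_d_pos hw.1)

lemma needHi_mb {z : Fin n} (h : S.needHi z) : 1 ≤ S.mb z := by
  rcases h with ⟨_, h, _⟩ | ⟨w, hw, _⟩
  · exact S.mb_pos_of_ind h
  · exact S.mb_pos_of_d (S.arc_d_pos hw.1)

lemma negS_false {z : Fin n} (h : ∀ i, S.G.neg z i = false) : S.negS z = false := by
  simp only [negS, decide_eq_false_iff_not]
  rintro ⟨i, hi⟩
  rw [h i] at hi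
  exact Bool.false_ne_true hi

lemma negS_true {z i : Fin n} (h : S.G.neg z i = true) : S.negS z = true := by
  simp only [negS, decide_eq_true_iff]
  exact ⟨i, h⟩

lemma D_needLo {z : Fin n} (hD : S.Dv z) (h : S.needLo z) : S.vB z = true := by
  rcases h with ⟨_, _, h⟩ | ⟨w, hw, h⟩
  · exact h
  · rw [S.piv_D hD] at h
    rcases h with ⟨hs, hp⟩ | ⟨hs, hp⟩
    · rw [S.negS_false (S.d1_sign hD.2.2 hs.1)] at hp
      simpa using hp
    · rw [S.negS_true hs.2] at hp
      simpa using hp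

lemma D_needHi {z : Fin n} (hD : S.Dv z) (h : S.needHi z) : S.vB z = false := by
  rcases h with ⟨_, _, h⟩ | ⟨w, hw, h⟩
  · exact h
  · rw [S.piv_D hD] at h
    rcases h with ⟨hs, hp⟩ | ⟨hs, hp⟩
    · rw [S.negS_false (S.d1_sign hD.2.2 hs.1)] at hp
      simpa using hp
    · rw [S.negS_true hs.2] at hp
      simpa using hp

lemma wit_ne {z w w' : Fin n}
    (h : (S.sPos z w ∧ S.piv z w = true) ∨ (S.sNeg z w ∧ S.piv z w = false))
    (h' : (S.sPos z w' ∧ S.piv z w' = false) ∨ (S.sNeg z w' ∧ S.piv z w' = true)) :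
    w ≠ w' := by
  rintro rfl
  rcases h with ⟨⟨hp, hn⟩, h2⟩ | ⟨⟨hp, hn⟩, h2⟩ <;>
    rcases h' with ⟨⟨hp', hn'⟩, h2'⟩ | ⟨⟨hp', hn'⟩, h2'⟩ <;> simp_all

lemma both_mb {z : Fin n} (hC : ¬S.inC z) (h1 : S.needLo z) (h2 : S.needHi z) :
    2 ≤ S.mb z := by
  have hd : 0 < S.d z ∨ 0 < S.ind z := by
    rcases h1 with ⟨_, h, _⟩ | ⟨w, hw, _⟩
    · exact Or.inr h
    · exact Or.inl (S.arc_d_pos hw.1)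
  have hnD : S.d z ≠ 1 ∨ ¬(0 < S.ind z) := by
    by_contra hcon
    push_neg at hcon
    have hD : S.Dv z := ⟨hC, hcon.2, hcon.1⟩
    have ht := S.D_needLo hD h1
    have hf := S.D_needHi hD h2
    simp [ht] at hf
  rcases h1 with ⟨_, hi1, hv1⟩ | ⟨w, hw, hwit⟩
  · rcases h2 with ⟨_, _, hv2⟩ | ⟨w', hw', hwit'⟩
    · rw [hv1] at hv2; simp at hv2
    · -- v-clause + arc witness
      have hd1 : 0 < S.d z := S.arc_d_pos hw'.1
      have : S.d z ≠ 1 := by tauto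
      rw [S.mb_eq_d hd1]; omega
  · rcases h2 with ⟨_, hi2, hv2⟩ | ⟨w', hw', hwit'⟩
    · have hd1 : 0 < S.d z := S.arc_d_pos hw.1
      have : S.d z ≠ 1 := by tauto
      rw [S.mb_eq_d hd1]; omega
    · have hne : w ≠ w' := S.wit_ne hwit hwit'
      have a1 : S.G.arc z w := by
        rcases hwit with ⟨h, _⟩ | ⟨h, _⟩; exacts [Or.inl h.1, Or.inr h.2]
      have a2 : S.G.arc z w' := by
        rcases hwit' with ⟨h, _⟩ | ⟨h, _⟩; exacts [Or.inl h.1, Or.inr h.2]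
      have h2a : 2 ≤ S.d z := S.two_arcs a1 a2 hne
      rw [S.mb_eq_d (by omega)]; omega

lemma tB_nonneg (z : Fin n) : 0 ≤ S.tB z := by
  unfold tB
  by_cases h1 : S.needHi z <;> by_cases h2 : S.needLo z <;>
    simp only [h1, h2, if_pos, if_neg, if_true, if_false] <;> omega

lemma tB_le_mb (z : Fin n) : S.tB z ≤ (S.mb z : ℤ) := by
  unfold tB
  by_cases h1 : S.needHi z <;> by_cases h2 : S.needLo z <;>
    simp only [h1, h2, if_pos, if_neg, if_true, if_false]
  · have := S.needLo_mb h2; omega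
  · omega
  · omega
  · omega

lemma tB_pos_of_needLo {z : Fin n} (h : S.needLo z) : 1 ≤ S.tB z := by
  unfold tB
  by_cases hHi : S.needHi z
  · rw [if_pos hHi, if_pos h]
  · rw [if_neg hHi, if_pos h]
    have := S.needLo_mb h; omega

lemma noncyc_needHi {z : Fin n} (hC : ¬S.inC z) (h : S.needHi z) :
    S.tB z + 1 ≤ (S.mb z : ℤ) := by
  unfold tB
  rw [if_pos h]
  by_cases hLo : S.needLo z
  · rw [if_pos hLo]
    have := S.both_mb hC hLo h
    omega
  · rw [if_neg hLo]
    have := S.needHi_mb h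
    omega

end Stmt5Setup
namespace Stmt5Setup

variable {n k : ℕ} (S : Stmt5Setup n k)

/-! ### Cycle-vertex feasibility -/

lemma targets_le_d {z : Fin n} (T : Finset (Fin n)) (hT : ∀ w ∈ T, S.G.arc z w) :
    T.card ≤ S.d z := by
  have hsub : T ⊆ (Finset.univ.filter fun j => S.G.pos z j = true) ∪
      (Finset.univ.filter fun j => S.G.neg z j = true) := by
    intro w hw
    rcases hT w hw with h | h
    · exact Finset.mem_union_left _ (by simp [h])
    · exact Finset.mem_union_right _ (by simp [h])
  calc T.card ≤ _ := Finset.card_le_card hsub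
    _ ≤ _ := Finset.card_union_le _ _

lemma three_arcs {z a b c : Fin n} (h1 : S.G.arc z a) (h2 : S.G.arc z b)
    (h3 : S.G.arc z c) (hab : a ≠ b) (hac : a ≠ c) (hbc : b ≠ c) : 3 ≤ S.d z := by
  have := S.targets_le_d {a, b, c} (by
    intro w hw; simp at hw; rcases hw with rfl | rfl | rfl <;> assumption)
  rw [Finset.card_insert_of_notMem (by simp [hab, hac]),
    Finset.card_insert_of_notMem (by simp [hbc])] at this
  simpa using this

lemma cyc_needLo_d2 {z : Fin n} (hC : S.inC z) (h : S.needLo z) : 2 ≤ S.d z := by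
  rcases h with ⟨hnc, _, _⟩ | ⟨w, hw, _⟩
  · exact absurd hC hnc
  · exact S.two_arcs (S.succ_arc' hC) hw.1 (Ne.symm (S.gen_ne_succ hC hw))

lemma succPair_d2 {z : Fin n} (h : S.succPair z) : 2 ≤ S.d z := S.pair_d2 h.2

lemma loB_cases (z : Fin n) : S.loB z = 0 ∨ S.loB z = 1 := by
  unfold loB; split
  · exact Or.inr rfl
  · exact Or.inl rfl

lemma loB_one {z : Fin n} (h : S.loB z = 1) : S.needLo z ∨ S.succPair z := by
  by_contra hc
  unfold loB at h
  rw [if_neg hc] at h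
  exact absurd h (by norm_num)

lemma loB_of {z : Fin n} (h : S.needLo z ∨ S.succPair z) : S.loB z = 1 := by
  unfold loB; rw [if_pos h]

lemma cyc_lo_mb {z : Fin n} (hC : S.inC z) : S.loB z + 1 ≤ (S.mb z : ℤ) := by
  rcases S.loB_cases z with h | h <;> rw [h]
  · have : 0 < S.d z := S.arc_d_pos (S.succ_arc' hC)
    have := S.mb_pos_of_d this; omega
  · have h2 : 2 ≤ S.d z := by
      rcases S.loB_one h with h' | h'
      · exact S.cyc_needLo_d2 hC h'
      · exact S.succPair_d2 h'
    rw [S.mb_eq_d (by omega)]; omega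

lemma cyc_needHi_mb {z : Fin n} (hC : S.inC z) (h : S.needHi z) :
    S.loB z + 2 ≤ (S.mb z : ℤ) := by
  obtain ⟨w', hw', hwit'⟩ : ∃ w', S.gen z w' ∧
      ((S.sPos z w' ∧ S.piv z w' = false) ∨ (S.sNeg z w' ∧ S.piv z w' = true)) := by
    rcases h with ⟨hnc, _, _⟩ | h'
    · exact absurd hC hnc
    · exact h'
  have ha' : S.G.arc z w' := by
    rcases hwit' with ⟨h1, _⟩ | ⟨h1, _⟩; exacts [Or.inl h1.1, Or.inr h1.2]
  rcases S.loB_cases z with hl | hl <;> rw [hl]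
  · have h2 : 2 ≤ S.d z := S.two_arcs (S.succ_arc' hC) ha' (Ne.symm (S.gen_ne_succ hC hw'))
    rw [S.mb_eq_d (by omega)]; omega
  · have h3 : 3 ≤ S.d z := by
      rcases S.loB_one hl with h' | h'
      · obtain ⟨w, hw, hwit⟩ : ∃ w, S.gen z w ∧
            ((S.sPos z w ∧ S.piv z w = true) ∨ (S.sNeg z w ∧ S.piv z w = false)) := by
          rcases h' with ⟨hnc, _, _⟩ | h''
          · exact absurd hC hnc
          · exact h''
        have ha : S.G.arc z w := by
          rcases hwit with ⟨h1, _⟩ | ⟨h1, _⟩; exacts [Or.inl h1.1, Or.inr h1.2]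
        exact S.three_arcs (S.succ_arc' hC) ha ha'
          (Ne.symm (S.gen_ne_succ hC hw)) (Ne.symm (S.gen_ne_succ hC hw'))
          (S.wit_ne hwit hwit')
      · exact S.pair_plus h'.2 ha' (S.gen_ne_succ hC hw')
    rw [S.mb_eq_d (by omega)]; omega

lemma pair_not_wit {z w w1 : Fin n} (hp : S.sPair z w)
    (h : (S.sPos z w1 ∧ S.piv z w1 = true) ∨ (S.sNeg z w1 ∧ S.piv z w1 = false) ∨
      (S.sPos z w1 ∧ S.piv z w1 = false) ∨ (S.sNeg z w1 ∧ S.piv z w1 = true)) :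
    w1 ≠ w := by
  rintro rfl
  rcases h with ⟨⟨_, h1⟩, _⟩ | ⟨⟨h1, _⟩, _⟩ | ⟨⟨_, h1⟩, _⟩ | ⟨⟨h1, _⟩, _⟩ <;>
    [skip; skip; skip; skip] <;> simp_all [sPair] <;> simp [hp.1, hp.2] at h1

lemma tB_cases (z : Fin n) :
    S.tB z = 0 ∨ S.tB z = 1 ∨ (S.tB z = (S.mb z : ℤ) ∧ ¬ S.needHi z) := by
  unfold tB
  by_cases h1 : S.needHi z <;> by_cases h2 : S.needLo z <;>
    simp [h1, h2]

lemma pair_c_bounds {z w : Fin n} (hp : S.sPair z w) (hg : S.gen z w) :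
    1 ≤ S.cB z ∧ S.cB z + 1 ≤ (S.mb z : ℤ) ∧ S.cB z ≠ S.rlo z ∧ S.cB z ≠ S.rhi z := by
  have hmb2 : 2 ≤ S.mb z := by
    have := S.pair_d2 hp
    rw [S.mb_eq_d (by omega)]; omega
  by_cases hC : S.inC z
  · have hwne : w ≠ S.succV z := S.gen_ne_succ hC hg
    rcases S.loB_cases z with hl | hl
    · -- loB = 0, cB = 2, need mb ≥ 3
      have h3 : 3 ≤ S.d z := S.pair_plus hp (S.succ_arc' hC) (Ne.symm hwne)
      have hmb : 3 ≤ S.mb z := by rw [S.mb_eq_d (by omega)]; omega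
      have hc : S.cB z = 2 := by
        unfold cB
        rw [if_pos hC, if_neg (by rw [hl]; norm_num)]
      rw [hc]
      refine ⟨by norm_num, by omega, ?_, ?_⟩ <;> simp [rlo, rhi, hC, hl] <;> omega
    · -- loB = 1, cB = 3, need mb ≥ 4
      have h4 : 4 ≤ S.d z := by
        rcases S.loB_one hl with h' | h'
        · obtain ⟨w1, hw1, hwit⟩ : ∃ w1, S.gen z w1 ∧
              ((S.sPos z w1 ∧ S.piv z w1 = true) ∨ (S.sNeg z w1 ∧ S.piv z w1 = false)) := by
            rcases h' with ⟨hnc, _, _⟩ | h''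
            · exact absurd hC hnc
            · exact h''
          have ha : S.G.arc z w1 := by
            rcases hwit with ⟨h1, _⟩ | ⟨h1, _⟩; exacts [Or.inl h1.1, Or.inr h1.2]
          have hne1 : w1 ≠ w := S.pair_not_wit hp (by tauto)
          exact S.pair_plus2 hp ha (S.succ_arc' hC)
            (S.gen_ne_succ hC hw1) hne1 (Ne.symm hwne)
        · exact S.two_pairs hp h'.2 hwne
      have hmb : 4 ≤ S.mb z := by rw [S.mb_eq_d (by omega)]; omega
      have hc : S.cB z = 3 := by
        unfold cB
        rw [if_pos hC, if_pos hl]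
      rw [hc]
      refine ⟨by norm_num, by omega, ?_, ?_⟩ <;> simp [rlo, rhi, hC, hl] <;> omega
  · -- non-cycle vertex
    have hrl : S.rlo z = S.tB z := by simp [rlo, hC]
    have hrh : S.rhi z = S.tB z := by simp [rhi, hC]
    by_cases ht : S.tB z = 1
    · -- need both needLo and needHi, mb ≥ 3
      have hboth : S.needLo z ∧ S.needHi z := by
        unfold tB at ht
        by_cases h1 : S.needHi z <;> by_cases h2 : S.needLo z <;>
          simp [h1, h2] at ht ⊢
        omega
      have h3 : 3 ≤ S.d z := by
        -- at least one of the two witnesses is an arc witness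
        rcases hboth.1 with ⟨_, _, hv1⟩ | ⟨w1, hw1, hwit⟩
        · rcases hboth.2 with ⟨_, _, hv2⟩ | ⟨w1, hw1, hwit⟩
          · rw [hv1] at hv2; simp at hv2
          · have ha : S.G.arc z w1 := by
              rcases hwit with ⟨h1, _⟩ | ⟨h1, _⟩; exacts [Or.inl h1.1, Or.inr h1.2]
            exact S.pair_plus hp ha (S.pair_not_wit hp (by tauto))
        · have ha : S.G.arc z w1 := by
            rcases hwit with ⟨h1, _⟩ | ⟨h1, _⟩; exacts [Or.inl h1.1, Or.inr h1.2]
          exact S.pair_plus hp ha (S.pair_not_wit hp (by tauto))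
      have hmb : 3 ≤ S.mb z := by rw [S.mb_eq_d (by omega)]; omega
      have hc : S.cB z = 2 := by
        unfold cB
        rw [if_neg hC, if_pos ht]
      rw [hc, hrl, hrh, ht]
      norm_num; omega
    · have hc : S.cB z = 1 := by
        unfold cB
        rw [if_neg hC, if_neg ht]
      rw [hc, hrl, hrh]
      exact ⟨le_refl _, by omega, Ne.symm ht, Ne.symm ht⟩

end Stmt5Setup
namespace Stmt5Setup

inductive ShapeK where
  | ge (a : ℤ) | lt (a : ℤ) | eq (a : ℤ) | ne (a : ℤ)

noncomputable def ShapeK.val : ShapeK → ℤ → Bool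
  | .ge a, x => decide (a ≤ x)
  | .lt a, x => decide (x < a)
  | .eq a, x => decide (x = a)
  | .ne a, x => decide (x ≠ a)

variable {n k : ℕ} (S : Stmt5Setup n k)

noncomputable def shp (z w : Fin n) : ShapeK :=
  if S.isSucc z w then
    (if S.sPair z w then (if S.psign w then .ne (S.loB z) else .eq (S.loB z))
     else if S.psign w then .ge (S.loB z + 1) else .lt (S.loB z + 1))
  else if S.sPair z w then (if S.piv z w then .ne (S.cB z) else .eq (S.cB z))
  else if S.sPos z w then .ge (if S.piv z w then 1 else S.rhi z + 1)
  else .lt (if S.piv z w then S.rhi z + 1 else 1)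

noncomputable def uB (z w : Fin n) (x : ℤ) : Bool := (S.shp z w).val x

/-! ### basic bounds on rest values -/

lemma loB_nonneg (z : Fin n) : 0 ≤ S.loB z := by
  rcases S.loB_cases z with h | h <;> rw [h] <;> norm_num

lemma rlo_nonneg (z : Fin n) : 0 ≤ S.rlo z := by
  unfold rlo; split
  · exact S.loB_nonneg z
  · exact S.tB_nonneg z

lemma rlo_le_rhi (z : Fin n) : S.rlo z ≤ S.rhi z := by
  unfold rlo rhi; split <;> omega

lemma rhi_nonneg (z : Fin n) : 0 ≤ S.rhi z :=
  le_trans (S.rlo_nonneg z) (S.rlo_le_rhi z)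

lemma rhi_le_mb {z : Fin n} (hC : S.inC z) : S.rhi z ≤ (S.mb z : ℤ) := by
  unfold rhi; rw [if_pos hC]
  have := S.cyc_lo_mb hC; omega

lemma rhi_le_mb' {z : Fin n} (hd : 0 < S.d z ∨ 0 < S.ind z) : S.rhi z ≤ (S.mb z : ℤ) := by
  unfold rhi; split
  · have := S.cyc_lo_mb (by assumption); omega
  · exact S.tB_le_mb z

lemma needLo_rlo {z : Fin n} (h : S.needLo z) : 1 ≤ S.rlo z := by
  unfold rlo; split
  · rw [S.loB_of (Or.inl h)]
  · exact S.tB_pos_of_needLo h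

lemma needHi_rhi {z : Fin n} (h : S.needHi z) : S.rhi z + 1 ≤ (S.mb z : ℤ) := by
  unfold rhi; split
  · have := S.cyc_needHi_mb (by assumption) h; omega
  · have := S.noncyc_needHi (by assumption) h; omega

/-! ### derived need facts -/

lemma needLo_of_pos {z w : Fin n} (hg : S.gen z w) (hs : S.sPos z w)
    (hpv : S.piv z w = true) : S.needLo z := Or.inr ⟨w, hg, Or.inl ⟨hs, hpv⟩⟩

lemma needHi_of_pos {z w : Fin n} (hg : S.gen z w) (hs : S.sPos z w)
    (hpv : S.piv z w = false) : S.needHi z := Or.inr ⟨w, hg, Or.inl ⟨hs, hpv⟩⟩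

lemma needLo_of_neg {z w : Fin n} (hg : S.gen z w) (hs : S.sNeg z w)
    (hpv : S.piv z w = false) : S.needLo z := Or.inr ⟨w, hg, Or.inr ⟨hs, hpv⟩⟩

lemma needHi_of_neg {z w : Fin n} (hg : S.gen z w) (hs : S.sNeg z w)
    (hpv : S.piv z w = true) : S.needHi z := Or.inr ⟨w, hg, Or.inr ⟨hs, hpv⟩⟩

lemma sPos_not_pair {z w : Fin n} (h : S.sPos z w) : ¬ S.sPair z w := by
  intro hp
  have h2 := hp.2
  rw [h.2] at h2
  exact Bool.noConfusion h2

lemma sNeg_not_pair {z w : Fin n} (h : S.sNeg z w) : ¬ S.sPair z w := by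
  intro hp
  have h2 := hp.1
  rw [h.1] at h2
  exact Bool.noConfusion h2

lemma sNeg_not_pos {z w : Fin n} (h : S.sNeg z w) : ¬ S.sPos z w := by
  intro hp
  have h2 := hp.1
  rw [h.1] at h2
  exact Bool.noConfusion h2

/-! ### pinned values at rest -/

lemma pinned {z w : Fin n} (hg : S.gen z w) (xv : ℤ)
    (hx : xv = S.rlo z ∨ xv = S.rhi z) : S.uB z w xv = S.piv z w := by
  have harc := hg.1
  have hxlo : S.rlo z ≤ xv := by rcases hx with rfl | rfl; exacts [le_refl _, S.rlo_le_rhi z]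
  have hxhi : xv ≤ S.rhi z := by rcases hx with rfl | rfl; exacts [S.rlo_le_rhi z, le_refl _]
  unfold uB shp
  rw [if_neg hg.2]
  rcases S.arc_cases harc with hs | hs | hs
  · rw [if_neg (S.sPos_not_pair hs), if_pos hs]
    by_cases hpv : S.piv z w = true
    · have h1 := S.needLo_rlo (S.needLo_of_pos hg hs hpv)
      simp only [hpv, if_true, ShapeK.val, decide_eq_true_eq]
      omega
    · have hpv' : S.piv z w = false := by simpa using hpv
      simp only [hpv', Bool.false_eq_true, if_false, ShapeK.val, decide_eq_false_iff_not]
      omega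
  · rw [if_neg (S.sNeg_not_pair hs), if_neg (S.sNeg_not_pos hs)]
    by_cases hpv : S.piv z w = true
    · simp only [hpv, if_true, ShapeK.val, decide_eq_true_eq]
      omega
    · have hpv' : S.piv z w = false := by simpa using hpv
      have h1 := S.needLo_rlo (S.needLo_of_neg hg hs hpv')
      simp only [hpv', Bool.false_eq_true, if_false, ShapeK.val, decide_eq_false_iff_not]
      omega
  · rw [if_pos hs]
    obtain ⟨hc1, hc2, hc3, hc4⟩ := S.pair_c_bounds hs hg
    by_cases hpv : S.piv z w = true
    · simp only [hpv, if_true, ShapeK.val, ne_eq, decide_eq_true_eq]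
      rcases hx with rfl | rfl
      · exact fun hcon => hc3 hcon.symm
      · exact fun hcon => hc4 hcon.symm
    · have hpv' : S.piv z w = false := by simpa using hpv
      simp only [hpv', Bool.false_eq_true, if_false, ShapeK.val, decide_eq_false_iff_not]
      rcases hx with rfl | rfl <;> omega

/-! ### toggle values -/

lemma toggle_val {w : Fin n} (hC : S.inC w) (b : Bool) :
    S.uB (S.pred w) w (S.loB (S.pred w) + (if b then 1 else 0))
      = (if S.psign w then b else !b) := by
  have hsucc : S.isSucc (S.pred w) w := ⟨hC, rfl⟩
  unfold uB shp
  rw [if_pos hsucc]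
  by_cases hpair : S.sPair (S.pred w) w
  · rw [if_pos hpair]
    cases hps : S.psign w <;> cases b <;>
      simp [ShapeK.val] <;> omega
  · rw [if_neg hpair]
    cases hps : S.psign w <;> cases b <;>
      simp [ShapeK.val] <;> omega

/-! ### attainability -/

lemma succPair_lo {z : Fin n} (h : S.succPair z) : S.loB z = 1 := S.loB_of (Or.inr h)

lemma attain {z w : Fin n} (harc : S.G.arc z w) (b : Bool) :
    ∃ xv : ℤ, 0 ≤ xv ∧ xv ≤ (S.mb z : ℤ) ∧ S.uB z w xv = b := by
  have hd1 : (1:ℤ) ≤ (S.mb z : ℤ) := by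
    have := S.mb_pos_of_d (S.arc_d_pos harc); omega
  by_cases hsucc : S.isSucc z w
  · obtain ⟨hCw, rfl⟩ := hsucc
    have hCz : S.inC (S.pred w) := S.pred_inC
    have hlo0 := S.loB_nonneg (S.pred w)
    have hlo1 := S.cyc_lo_mb hCz
    have hsucc : S.isSucc (S.pred w) w := ⟨hCw, rfl⟩
    unfold uB shp
    rw [if_pos hsucc]
    by_cases hpair : S.sPair (S.pred w) w
    · rw [if_pos hpair]
      cases hps : S.psign w <;> cases b
      · exact ⟨S.loB (S.pred w) + 1, by omega, by omega, by simp [ShapeK.val] <;> omega⟩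
      · exact ⟨S.loB (S.pred w), by omega, by omega, by simp [ShapeK.val]⟩
      · exact ⟨S.loB (S.pred w), by omega, by omega, by simp [ShapeK.val]⟩
      · exact ⟨S.loB (S.pred w) + 1, by omega, by omega, by simp [ShapeK.val] <;> omega⟩
    · rw [if_neg hpair]
      cases hps : S.psign w <;> cases b
      · exact ⟨S.loB (S.pred w) + 1, by omega, by omega, by simp [ShapeK.val]⟩
      · exact ⟨S.loB (S.pred w), by omega, by omega, by simp [ShapeK.val]⟩
      · exact ⟨S.loB (S.pred w), by omega, by omega, by simp [ShapeK.val]⟩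
      · exact ⟨S.loB (S.pred w) + 1, by omega, by omega, by simp [ShapeK.val]⟩
  · have hg : S.gen z w := ⟨harc, hsucc⟩
    unfold uB shp
    rw [if_neg hsucc]
    have hr0 := S.rhi_nonneg z
    rcases S.arc_cases harc with hs | hs | hs
    · rw [if_neg (S.sPos_not_pair hs), if_pos hs]
      by_cases hpv : S.piv z w = true
      · rw [hpv, if_pos rfl]
        cases b
        · exact ⟨0, by omega, by omega, by simp [ShapeK.val]⟩
        · exact ⟨1, by omega, by omega, by simp [ShapeK.val]⟩
      · have hpv' : S.piv z w = false := by simpa using hpv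
        rw [hpv']
        have hb := S.needHi_rhi (S.needHi_of_pos hg hs hpv')
        cases b
        · exact ⟨0, by omega, by omega, by simp [ShapeK.val] <;> omega⟩
        · exact ⟨S.rhi z + 1, by omega, by omega, by simp [ShapeK.val]⟩
    · rw [if_neg (S.sNeg_not_pair hs), if_neg (S.sNeg_not_pos hs)]
      by_cases hpv : S.piv z w = true
      · rw [hpv, if_pos rfl]
        have hb := S.needHi_rhi (S.needHi_of_neg hg hs hpv)
        cases b
        · exact ⟨S.rhi z + 1, by omega, by omega, by simp [ShapeK.val]⟩
        · exact ⟨0, by omega, by omega, by simp [ShapeK.val] <;> omega⟩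
      · have hpv' : S.piv z w = false := by simpa using hpv
        rw [hpv']
        cases b
        · exact ⟨1, by omega, by omega, by simp [ShapeK.val]⟩
        · exact ⟨0, by omega, by omega, by simp [ShapeK.val]⟩
    · rw [if_pos hs]
      obtain ⟨hc1, hc2, _, _⟩ := S.pair_c_bounds hs hg
      by_cases hpv : S.piv z w = true
      · rw [hpv, if_pos rfl]
        cases b
        · exact ⟨S.cB z, by omega, by omega, by simp [ShapeK.val]⟩
        · exact ⟨0, by omega, by omega, by simp [ShapeK.val] <;> omega⟩
      · have hpv' : S.piv z w = false := by simpa using hpv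
        rw [hpv']
        cases b
        · exact ⟨0, by omega, by omega, by simp [ShapeK.val] <;> omega⟩
        · exact ⟨S.cB z, by omega, by omega, by simp [ShapeK.val]⟩

end Stmt5Setup
namespace Stmt5Setup

variable {n k : ℕ} (S : Stmt5Setup n k)

lemma succPair_of_pair {w : Fin n} (hCw : S.inC w) (hpair : S.sPair (S.pred w) w) :
    S.succPair (S.pred w) := by
  refine ⟨S.pred_inC, ?_⟩
  rwa [S.succV_pred hCw]

lemma psign_true_of_single {w : Fin n} (hCw : S.inC w) (hp : S.G.pos (S.pred w) w = true)
    (hpair : ¬ S.sPair (S.pred w) w) : S.psign w = true := by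
  by_contra h
  have hps' : S.psign w = false := by simpa using h
  have h2 := S.pred_arc hCw
  rw [hps'] at h2
  simp at h2
  exact hpair ⟨hp, h2⟩

lemma psign_false_of_single {w : Fin n} (hCw : S.inC w) (hp : S.G.neg (S.pred w) w = true)
    (hpair : ¬ S.sPair (S.pred w) w) : S.psign w = false := by
  by_contra h
  have hps' : S.psign w = true := by simpa using h
  have h2 := S.pred_arc hCw
  rw [hps'] at h2
  simp at h2
  exact hpair ⟨h2, hp⟩

lemma stepUp {z w : Fin n} (hp : S.G.pos z w = true) :
    ∃ xv : ℤ, 0 ≤ xv ∧ xv + 1 ≤ (S.mb z : ℤ) ∧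
      S.uB z w xv = false ∧ S.uB z w (xv + 1) = true := by
  have harc : S.G.arc z w := Or.inl hp
  have hd1 : (1:ℤ) ≤ (S.mb z : ℤ) := by
    have := S.mb_pos_of_d (S.arc_d_pos harc); omega
  by_cases hsucc : S.isSucc z w
  · obtain ⟨hCw, rfl⟩ := hsucc
    have hCz : S.inC (S.pred w) := S.pred_inC
    have hlo0 := S.loB_nonneg (S.pred w)
    have hlo1 := S.cyc_lo_mb hCz
    have hsucc : S.isSucc (S.pred w) w := ⟨hCw, rfl⟩
    unfold uB shp
    rw [if_pos hsucc]
    by_cases hpair : S.sPair (S.pred w) w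
    · rw [if_pos hpair]
      have hlo' : S.loB (S.pred w) = 1 := S.succPair_lo (S.succPair_of_pair hCw hpair)
      cases hps : S.psign w
      · exact ⟨S.loB (S.pred w) - 1, by omega, by omega,
          by simp [ShapeK.val] <;> omega, by simp [ShapeK.val] <;> omega⟩
      · exact ⟨S.loB (S.pred w), by omega, by omega,
          by simp [ShapeK.val] <;> omega, by simp [ShapeK.val] <;> omega⟩
    · rw [if_neg hpair]
      rw [S.psign_true_of_single hCw hp hpair]
      exact ⟨S.loB (S.pred w), by omega, by omega,
        by simp [ShapeK.val] <;> omega, by simp [ShapeK.val] <;> omega⟩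
  · have hg : S.gen z w := ⟨harc, hsucc⟩
    unfold uB shp
    rw [if_neg hsucc]
    have hr0 := S.rhi_nonneg z
    rcases S.arc_cases harc with hs | hs | hs
    · rw [if_neg (S.sPos_not_pair hs), if_pos hs]
      by_cases hpv : S.piv z w = true
      · rw [hpv]
        exact ⟨0, by omega, by omega,
          by simp [ShapeK.val] <;> omega, by simp [ShapeK.val] <;> omega⟩
      · have hpv' : S.piv z w = false := by simpa using hpv
        rw [hpv']
        have hb := S.needHi_rhi (S.needHi_of_pos hg hs hpv')
        exact ⟨S.rhi z, by omega, by omega,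
          by simp [ShapeK.val] <;> omega, by simp [ShapeK.val] <;> omega⟩
    · rw [hs.1] at hp; exact Bool.noConfusion hp
    · rw [if_pos hs]
      obtain ⟨hc1, hc2, _, _⟩ := S.pair_c_bounds hs hg
      by_cases hpv : S.piv z w = true
      · rw [hpv]
        exact ⟨S.cB z, by omega, by omega,
          by simp [ShapeK.val] <;> omega, by simp [ShapeK.val] <;> omega⟩
      · have hpv' : S.piv z w = false := by simpa using hpv
        rw [hpv']
        exact ⟨S.cB z - 1, by omega, by omega,
          by simp [ShapeK.val] <;> omega, by simp [ShapeK.val] <;> omega⟩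

lemma stepDown {z w : Fin n} (hn : S.G.neg z w = true) :
    ∃ xv : ℤ, 0 ≤ xv ∧ xv + 1 ≤ (S.mb z : ℤ) ∧
      S.uB z w xv = true ∧ S.uB z w (xv + 1) = false := by
  have harc : S.G.arc z w := Or.inr hn
  have hd1 : (1:ℤ) ≤ (S.mb z : ℤ) := by
    have := S.mb_pos_of_d (S.arc_d_pos harc); omega
  by_cases hsucc : S.isSucc z w
  · obtain ⟨hCw, rfl⟩ := hsucc
    have hCz : S.inC (S.pred w) := S.pred_inC
    have hlo0 := S.loB_nonneg (S.pred w)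
    have hlo1 := S.cyc_lo_mb hCz
    have hsucc : S.isSucc (S.pred w) w := ⟨hCw, rfl⟩
    unfold uB shp
    rw [if_pos hsucc]
    by_cases hpair : S.sPair (S.pred w) w
    · rw [if_pos hpair]
      have hlo' : S.loB (S.pred w) = 1 := S.succPair_lo (S.succPair_of_pair hCw hpair)
      cases hps : S.psign w
      · exact ⟨S.loB (S.pred w), by omega, by omega,
          by simp [ShapeK.val] <;> omega, by simp [ShapeK.val] <;> omega⟩
      · exact ⟨S.loB (S.pred w) - 1, by omega, by omega,
          by simp [ShapeK.val] <;> omega, by simp [ShapeK.val] <;> omega⟩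
    · rw [if_neg hpair]
      rw [S.psign_false_of_single hCw hn hpair]
      exact ⟨S.loB (S.pred w), by omega, by omega,
        by simp [ShapeK.val] <;> omega, by simp [ShapeK.val] <;> omega⟩
  · have hg : S.gen z w := ⟨harc, hsucc⟩
    unfold uB shp
    rw [if_neg hsucc]
    have hr0 := S.rhi_nonneg z
    rcases S.arc_cases harc with hs | hs | hs
    · rw [hs.2] at hn; exact Bool.noConfusion hn
    · rw [if_neg (S.sNeg_not_pair hs), if_neg (S.sNeg_not_pos hs)]
      by_cases hpv : S.piv z w = true
      · rw [hpv]
        have hb := S.needHi_rhi (S.needHi_of_neg hg hs hpv)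
        exact ⟨S.rhi z, by omega, by omega,
          by simp [ShapeK.val] <;> omega, by simp [ShapeK.val] <;> omega⟩
      · have hpv' : S.piv z w = false := by simpa using hpv
        rw [hpv']
        exact ⟨0, by omega, by omega,
          by simp [ShapeK.val] <;> omega, by simp [ShapeK.val] <;> omega⟩
    · rw [if_pos hs]
      obtain ⟨hc1, hc2, _, _⟩ := S.pair_c_bounds hs hg
      by_cases hpv : S.piv z w = true
      · rw [hpv]
        exact ⟨S.cB z - 1, by omega, by omega,
          by simp [ShapeK.val] <;> omega, by simp [ShapeK.val] <;> omega⟩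
      · have hpv' : S.piv z w = false := by simpa using hpv
        rw [hpv']
        exact ⟨S.cB z, by omega, by omega,
          by simp [ShapeK.val] <;> omega, by simp [ShapeK.val] <;> omega⟩

lemma u_noDown {z w : Fin n} (hnn : S.G.neg z w = false) (harc : S.G.arc z w) :
    ∀ a : ℤ, S.uB z w a = true → S.uB z w (a + 1) = true := by
  intro a
  have hp : S.G.pos z w = true := by
    rcases harc with h | h
    · exact h
    · rw [hnn] at h; exact Bool.noConfusion h
  have hpair : ¬ S.sPair z w := fun hc => by have h2 := hc.2; rw [hnn] at h2; exact Bool.noConfusion h2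
  by_cases hsucc : S.isSucc z w
  · obtain ⟨hCw, rfl⟩ := hsucc
    have hsucc : S.isSucc (S.pred w) w := ⟨hCw, rfl⟩
    unfold uB shp
    rw [if_pos hsucc, if_neg hpair, S.psign_true_of_single hCw hp hpair]
    simp [ShapeK.val]; omega
  · unfold uB shp
    rw [if_neg hsucc, if_neg hpair, if_pos ⟨hp, hnn⟩]
    by_cases hpv : S.piv z w = true <;>
      [rw [hpv]; rw [(by simpa using hpv : S.piv z w = false)]] <;>
      simp [ShapeK.val] <;> omega

lemma u_noUp {z w : Fin n} (hnp : S.G.pos z w = false) (harc : S.G.arc z w) :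
    ∀ a : ℤ, S.uB z w (a + 1) = true → S.uB z w a = true := by
  intro a
  have hn : S.G.neg z w = true := by
    rcases harc with h | h
    · rw [hnp] at h; exact Bool.noConfusion h
    · exact h
  have hpair : ¬ S.sPair z w := fun hc => by have h2 := hc.1; rw [hnp] at h2; exact Bool.noConfusion h2
  have hspos : ¬ S.sPos z w := fun hc => by have h2 := hc.1; rw [hnp] at h2; exact Bool.noConfusion h2
  by_cases hsucc : S.isSucc z w
  · obtain ⟨hCw, rfl⟩ := hsucc
    have hsucc : S.isSucc (S.pred w) w := ⟨hCw, rfl⟩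
    unfold uB shp
    rw [if_pos hsucc, if_neg hpair, S.psign_false_of_single hCw hn hpair]
    simp [ShapeK.val]; omega
  · unfold uB shp
    rw [if_neg hsucc, if_neg hpair, if_neg hspos]
    by_cases hpv : S.piv z w = true <;>
      [rw [hpv]; rw [(by simpa using hpv : S.piv z w = false)]] <;>
      simp [ShapeK.val] <;> omega

end Stmt5Setup
namespace Stmt5Setup

variable {n k : ℕ} (S : Stmt5Setup n k)

/-! ### parity of negative arcs along a cycle -/

noncomputable def nb (l : Fin k) (q : ℕ) : ℕ :=
  ((Finset.range q).filter (fun u => ∃ hu : u < S.m l + 1, S.s l ⟨u, hu⟩ = false)).card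

noncomputable def εF (l : Fin k) (a : Fin (S.m l + 1)) : Bool :=
  decide (S.nb l (a : ℕ) % 2 = 1)

lemma nb_succ (l : Fin k) (q : ℕ) (hq : q < S.m l + 1) :
    S.nb l (q + 1) = S.nb l q + (if S.s l ⟨q, hq⟩ = false then 1 else 0) := by
  unfold nb
  rw [Finset.range_add_one, Finset.filter_insert]
  by_cases h : ∃ hu : q < S.m l + 1, S.s l ⟨q, hu⟩ = false
  · rw [if_pos h, Finset.card_insert_of_notMem (by simp)]
    obtain ⟨_, h2⟩ := h
    rw [if_pos h2]
  · rw [if_neg h]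
    have h2 : ¬ S.s l ⟨q, hq⟩ = false := fun hc => h ⟨hq, hc⟩
    rw [if_neg h2]
    omega

lemma εF_zero (l : Fin k) : S.εF l 0 = false := by
  simp [εF, nb]

lemma εF_step (l : Fin k) (a : Fin (S.m l + 1)) :
    S.εF l (a + 1) = xor (S.εF l a) (! S.s l a) := by
  by_cases ha : (a : ℕ) < S.m l
  · have hval : ((a + 1 : Fin (S.m l + 1)) : ℕ) = (a : ℕ) + 1 := by
      rw [Fin.val_add_one_of_lt]
      exact ha
    unfold εF
    rw [hval, S.nb_succ l (a : ℕ) a.2]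
    have heta : (⟨(a : ℕ), a.2⟩ : Fin (S.m l + 1)) = a := rfl
    rw [heta]
    rcases Nat.mod_two_eq_zero_or_one (S.nb l (a : ℕ)) with h | h <;>
      cases hs : S.s l a
    · have h1 : (S.nb l (a:ℕ) + 1) % 2 = 1 := by omega
      simp [h, h1, hs]
    · have h1 : (S.nb l (a:ℕ) + 0) % 2 = 0 := by omega
      simp [h, h1, hs]
    · have h1 : (S.nb l (a:ℕ) + 1) % 2 = 0 := by omega
      simp [h, h1, hs]
    · have h1 : (S.nb l (a:ℕ) + 0) % 2 = 1 := by omega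
      simp [h, h1, hs]
  · -- a is the last position; wrap around using positivity of the cycle
    have haval : (a : ℕ) = S.m l := by have := a.2; omega
    have hlast : a = Fin.last (S.m l) := by
      apply Fin.ext; rw [haval]; rfl
    have hwrap : ((a + 1 : Fin (S.m l + 1)) : ℕ) = 0 := by
      rw [hlast]
      simp
    -- εF l (a+1) = εF at 0 = false
    have h0 : S.εF l (a + 1) = false := by
      unfold εF
      rw [hwrap]
      simp [nb]
    rw [h0]
    -- total parity is even
    have htot : S.nb l (S.m l + 1) % 2 = 0 := by
      have hbij : S.nb l (S.m l + 1) = SDigraph.negCount (S.s l) := by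
        unfold nb SDigraph.negCount
        apply Finset.card_bij (fun (u : ℕ) hu => (⟨u, by
          simp only [Finset.mem_filter, Finset.mem_range] at hu
          exact hu.1⟩ : Fin (S.m l + 1)))
        · intro u hu
          simp only [Finset.mem_filter, Finset.mem_range] at hu
          obtain ⟨h1, h2, h3⟩ := hu
          simp only [Finset.mem_filter, Finset.mem_univ, true_and]
          exact h3
        · intro u1 hu1 u2 hu2 he
          simpa using congrArg Fin.val he
        · intro b hb
          simp only [Finset.mem_filter, Finset.mem_univ, true_and] at hb
          refine ⟨(b : ℕ), ?_, ?_⟩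
          · simp only [Finset.mem_filter, Finset.mem_range]
            exact ⟨b.2, b.2, by simpa using hb⟩
          · simp
      rw [hbij]
      exact S.hpos l
    have hstep := S.nb_succ l (S.m l) (by omega)
    have heta2 : (⟨S.m l, by omega⟩ : Fin (S.m l + 1)) = a := by
      apply Fin.ext; simp [haval]
    rw [heta2] at hstep
    unfold εF
    rw [haval]
    cases hs : S.s l a
    · rw [hs] at hstep
      simp at hstep
      have hpar : S.nb l (S.m l) % 2 = 1 := by omega
      simp [hpar]
    · rw [hs] at hstep
      simp at hstep
      have hpar : S.nb l (S.m l) % 2 = 0 := by omega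
      simp [hpar]

/-! ### the toggling bit of cycle vertices -/

noncomputable def bitB (β : Fin k → Bool) (z : Fin n) : Bool :=
  xor (β (S.cyd z).1) (S.εF (S.cyd z).1 (S.cyd z).2)

lemma bit_v (β : Fin k → Bool) {l : Fin k} {a : Fin (S.m l + 1)} :
    S.bitB β (S.v l a) = xor (β l) (S.εF l a) :=
  congrArg (fun p : (Σ l : Fin k, Fin (S.m l + 1)) => xor (β p.1) (S.εF p.1 p.2)) S.cyd_spec

lemma bit_v0 (β : Fin k → Bool) {l : Fin k} : S.bitB β (S.v l 0) = β l := by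
  rw [S.bit_v, S.εF_zero]
  simp

lemma bit_pred (β : Fin k → Bool) {w : Fin n} (hC : S.inC w) :
    S.bitB β w = xor (xor (S.bitB β (S.pred w)) (! S.psign w)) false := by
  obtain ⟨l, a, rfl⟩ := hC
  rw [S.pred_v, S.psign_v, S.bit_v, S.bit_v]
  have hstep := S.εF_step l (a - 1)
  rw [sub_add_cancel] at hstep
  rw [hstep]
  cases β l <;> cases S.εF l (a-1) <;> cases S.s l (a-1) <;> rfl

end Stmt5Setup
namespace Stmt5Setup

variable {n k : ℕ} (S : Stmt5Setup n k)

/-! ### the map and the fixed states -/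

def Lp (x : Fin n → ℤ) (i : Fin n) : Prop := S.uB (S.pred i) i (x (S.pred i)) = true
def Op (x : Fin n → ℤ) (i : Fin n) : Prop := ∃ z, S.gen z i ∧ S.uB z i (x z) = true
def Ap (x : Fin n → ℤ) (i : Fin n) : Prop := ∀ z, S.gen z i → S.uB z i (x z) = true
def hasOne (i : Fin n) : Prop := ∃ z, S.gen z i ∧ S.piv z i = true

noncomputable def ff (x : Fin n → ℤ) (i : Fin n) : ℤ :=
  if S.inC i then
    S.loB i + (if (if S.hasOne i then (S.Lp x i ∧ S.Op x i) else (S.Lp x i ∨ S.Op x i))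
      then 1 else 0)
  else if 0 < S.ind i then
    (if S.vB i = true then (if S.Op x i then S.tB i else 0)
     else S.tB i + (if S.Ap x i then (S.mb i : ℤ) - S.tB i else 0))
  else S.tB i

noncomputable def xSt (β : Fin k → Bool) (z : Fin n) : ℤ :=
  if S.inC z then S.loB z + (if S.bitB β z then 1 else 0) else S.tB z

lemma xSt_rest (β : Fin k → Bool) (z : Fin n) :
    S.xSt β z = S.rlo z ∨ S.xSt β z = S.rhi z := by
  unfold xSt rlo rhi
  by_cases hC : S.inC z
  · rw [if_pos hC, if_pos hC, if_pos hC]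
    cases S.bitB β z <;> simp
  · rw [if_neg hC, if_neg hC, if_neg hC]
    exact Or.inl rfl

lemma xSt_bounds (β : Fin k → Bool) (z : Fin n) :
    0 ≤ S.xSt β z ∧ S.xSt β z ≤ (S.mb z : ℤ) := by
  unfold xSt
  by_cases hC : S.inC z
  · rw [if_pos hC]
    have h1 := S.loB_nonneg z
    have h2 := S.cyc_lo_mb hC
    cases S.bitB β z <;> simp <;> omega
  · rw [if_neg hC]
    exact ⟨S.tB_nonneg z, S.tB_le_mb z⟩

lemma u_at_xSt (β : Fin k → Bool) {z i : Fin n} (hg : S.gen z i) :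
    S.uB z i (S.xSt β z) = S.piv z i :=
  S.pinned hg _ (S.xSt_rest β z)

lemma Op_xSt (β : Fin k → Bool) (i : Fin n) : S.Op (S.xSt β) i ↔ S.hasOne i := by
  constructor
  · rintro ⟨z, hg, hu⟩
    exact ⟨z, hg, by rwa [S.u_at_xSt β hg] at hu⟩
  · rintro ⟨z, hg, hpv⟩
    exact ⟨z, hg, by rwa [S.u_at_xSt β hg]⟩

lemma Lp_xSt (β : Fin k → Bool) {i : Fin n} (hC : S.inC i) :
    S.Lp (S.xSt β) i ↔ S.bitB β i = true := by
  unfold Lp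
  have hCp : S.inC (S.pred i) := S.pred_inC
  have hx : S.xSt β (S.pred i) = S.loB (S.pred i) +
      (if S.bitB β (S.pred i) then 1 else 0) := by
    unfold xSt; rw [if_pos hCp]
  rw [hx, S.toggle_val hC (S.bitB β (S.pred i)), S.bit_pred β hC]
  cases hb : S.bitB β (S.pred i) <;> cases hps : S.psign i <;> simp

lemma gen_of_arc_notC {z i : Fin n} (hC : ¬ S.inC i) (h : S.G.arc z i) : S.gen z i :=
  ⟨h, fun hs => hC hs.1⟩

lemma ff_fixed (β : Fin k → Bool) (i : Fin n) : S.ff (S.xSt β) i = S.xSt β i := by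
  unfold ff
  by_cases hC : S.inC i
  · rw [if_pos hC]
    have hcond : (if S.hasOne i then (S.Lp (S.xSt β) i ∧ S.Op (S.xSt β) i)
        else (S.Lp (S.xSt β) i ∨ S.Op (S.xSt β) i)) ↔ S.Lp (S.xSt β) i := by
      by_cases h1 : S.hasOne i
      · rw [if_pos h1]
        have : S.Op (S.xSt β) i := (S.Op_xSt β i).mpr h1
        tauto
      · rw [if_neg h1]
        have : ¬ S.Op (S.xSt β) i := fun hc => h1 ((S.Op_xSt β i).mp hc)
        tauto
    by_cases hL : S.Lp (S.xSt β) i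
    · rw [if_pos (hcond.mpr hL)]
      have hb := (S.Lp_xSt β hC).mp hL
      unfold xSt
      rw [if_pos hC, hb]
      simp
    · rw [if_neg (fun hc => hL (hcond.mp hc))]
      have hb : S.bitB β i = false := by
        cases hbit : S.bitB β i
        · rfl
        · exact absurd ((S.Lp_xSt β hC).mpr hbit) hL
      unfold xSt
      rw [if_pos hC, hb]
      simp
  · rw [if_neg hC]
    by_cases hi : 0 < S.ind i
    · rw [if_pos hi]
      obtain ⟨z, harc, hpv⟩ := S.pin_lemma hC hi
      have hg : S.gen z i := S.gen_of_arc_notC hC harc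
      cases hv : S.vB i
      · simp only [Bool.false_eq_true, if_false]
        have hAp : ¬ S.Ap (S.xSt β) i := by
          intro hap
          have := hap z hg
          rw [S.u_at_xSt β hg, hpv, hv] at this
          exact Bool.noConfusion this
        rw [if_neg hAp]
        unfold xSt; rw [if_neg hC]
        omega
      · rw [if_pos rfl]
        have hOp : S.Op (S.xSt β) i := ⟨z, hg, by rw [S.u_at_xSt β hg, hpv, hv]⟩
        rw [if_pos hOp]
        unfold xSt; rw [if_neg hC]
    · rw [if_neg hi]
      unfold xSt; rw [if_neg hC]

/-! ### the FDS -/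

noncomputable def FF : FDS (Fin n) where
  X := S.XI
  nonempty := fun i => ⟨0, by simp [XI]⟩
  interval := by
    intro i a ha b hb c hac hcb
    simp only [XI, Finset.mem_Icc] at *
    omega
  f := S.ff
  maps := by
    intro x _ i
    simp only [XI, Finset.mem_Icc]
    unfold ff
    by_cases hC : S.inC i
    · rw [if_pos hC]
      have h1 := S.loB_nonneg i
      have h2 := S.cyc_lo_mb hC
      split <;> omega
    · rw [if_neg hC]
      have h1 := S.tB_nonneg i
      have h2 := S.tB_le_mb i
      by_cases hi : 0 < S.ind i
      · rw [if_pos hi]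
        cases hv : S.vB i
        · simp only [Bool.false_eq_true, if_false]
          split <;> omega
        · rw [if_pos rfl]
          split <;> omega
      · rw [if_neg hi]
        omega

lemma FF_degreeBounded : (S.FF).degreeBounded S.G := by
  intro i
  have hcard : ((S.FF).X i).card = S.mb i + 1 := by
    show (Finset.Icc (0:ℤ) (S.mb i)).card = S.mb i + 1
    rw [Int.card_Icc]
    simp
  constructor
  · rintro ⟨h1, h2⟩
    rw [hcard]
    unfold mb d at *
    rw [if_pos h1, if_neg (by unfold ind at *; omega)]
  · intro hni
    rw [hcard]
    by_cases hd : S.G.outdeg i = 0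
    · have hind : ¬ 0 < S.G.indeg i := fun hc => hni ⟨hd, hc⟩
      unfold mb d ind at *
      rw [if_pos hd, if_pos (by omega)]
      omega
    · unfold mb d at *
      rw [if_neg hd]

lemma xSt_inj : Function.Injective S.xSt := by
  intro β β' he
  funext l
  have h := congrFun he (S.v l 0)
  have hC : S.inC (S.v l 0) := ⟨l, 0, rfl⟩
  unfold xSt at h
  rw [if_pos hC, if_pos hC, S.bit_v0, S.bit_v0] at h
  cases hb : β l <;> cases hb' : β' l <;> simp_all

end Stmt5Setup
namespace Stmt5Setup

variable {n k : ℕ} (S : Stmt5Setup n k)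

/-! ### congruence and monotonicity of `ff` in one coordinate -/

lemma ff_congr {x y : Fin n → ℤ} {i : Fin n} (h : ∀ z, S.G.arc z i → x z = y z) :
    S.ff x i = S.ff y i := by
  have hLp : S.inC i → (S.Lp x i ↔ S.Lp y i) := by
    intro hC
    unfold Lp
    rw [h _ (S.pred_arc' hC)]
  have hOp : S.Op x i ↔ S.Op y i := by
    unfold Op
    constructor <;> rintro ⟨z, hg, hu⟩ <;> refine ⟨z, hg, ?_⟩
    · rwa [← h z hg.1]
    · rwa [h z hg.1]
  have hAp : S.Ap x i ↔ S.Ap y i := by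
    unfold Ap
    constructor <;> intro ha z hg
    · rw [← h z hg.1]; exact ha z hg
    · rw [h z hg.1]; exact ha z hg
  unfold ff
  by_cases hC : S.inC i
  · rw [if_pos hC, if_pos hC]
    congr 1
    have hiff : (if S.hasOne i then (S.Lp x i ∧ S.Op x i) else (S.Lp x i ∨ S.Op x i)) ↔
        (if S.hasOne i then (S.Lp y i ∧ S.Op y i) else (S.Lp y i ∨ S.Op y i)) := by
      by_cases h1 : S.hasOne i
      · rw [if_pos h1, if_pos h1]
        exact and_congr (hLp hC) hOp
      · rw [if_neg h1, if_neg h1]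
        exact or_congr (hLp hC) hOp
    exact if_congr hiff rfl rfl
  · rw [if_neg hC, if_neg hC]
    by_cases hi : 0 < S.ind i
    · rw [if_pos hi, if_pos hi]
      cases S.vB i
      · simp only [Bool.false_eq_true, if_false]
        congr 1
        exact if_congr hAp rfl rfl
      · rw [if_pos rfl, if_pos rfl]
        exact if_congr hOp rfl rfl
    · rw [if_neg hi, if_neg hi]

lemma ff_step_le {j i : Fin n} (hnn : S.G.neg j i = false) (x : Fin n → ℤ) :
    S.ff x i ≤ S.ff (Function.update x j (x j + 1)) i := by
  set y := Function.update x j (x j + 1) with hy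
  by_cases harc : S.G.arc j i
  case neg =>
    have : S.ff x i = S.ff y i := by
      apply S.ff_congr
      intro z hz
      have hzj : z ≠ j := fun he => harc (by rw [← he]; exact hz)
      rw [hy, Function.update_of_ne hzj]
    omega
  case pos =>
  have hyj : y j = x j + 1 := by rw [hy, Function.update_self]
  have hyz : ∀ z, z ≠ j → y z = x z := fun z hz => Function.update_of_ne hz _ _
  have hmono : ∀ z, S.G.arc z i → S.uB z i (x z) = true → S.uB z i (y z) = true := by
    intro z hz hu
    by_cases hzj : z = j
    · subst hzj
      rw [hyj]
      exact S.u_noDown hnn hz _ hu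
    · rwa [hyz z hzj]
  have hOp : S.Op x i → S.Op y i := by
    rintro ⟨z, hg, hu⟩
    exact ⟨z, hg, hmono z hg.1 hu⟩
  have hAp : S.Ap x i → S.Ap y i := fun ha z hg => hmono z hg.1 (ha z hg)
  have hLp : S.inC i → S.Lp x i → S.Lp y i := by
    intro hC hl
    exact hmono _ (S.pred_arc' hC) hl
  unfold ff
  by_cases hC : S.inC i
  · rw [if_pos hC, if_pos hC]
    have hc : (if S.hasOne i then (S.Lp x i ∧ S.Op x i) else (S.Lp x i ∨ S.Op x i)) →
        (if S.hasOne i then (S.Lp y i ∧ S.Op y i) else (S.Lp y i ∨ S.Op y i)) := by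
      by_cases h1 : S.hasOne i
      · rw [if_pos h1, if_pos h1]
        rintro ⟨ha, hb⟩
        exact ⟨hLp hC ha, hOp hb⟩
      · rw [if_neg h1, if_neg h1]
        rintro (ha | hb)
        · exact Or.inl (hLp hC ha)
        · exact Or.inr (hOp hb)
    by_cases h2 : (if S.hasOne i then (S.Lp x i ∧ S.Op x i) else (S.Lp x i ∨ S.Op x i))
    · rw [if_pos h2, if_pos (hc h2)]
    · rw [if_neg h2]
      split <;> omega
  · rw [if_neg hC, if_neg hC]
    by_cases hi : 0 < S.ind i
    · rw [if_pos hi, if_pos hi]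
      have ht0 := S.tB_nonneg i
      have ht1 := S.tB_le_mb i
      cases S.vB i
      · simp only [Bool.false_eq_true, if_false]
        by_cases h2 : S.Ap x i
        · rw [if_pos h2, if_pos (hAp h2)]
        · rw [if_neg h2]
          split <;> omega
      · rw [if_pos rfl, if_pos rfl]
        by_cases h2 : S.Op x i
        · rw [if_pos h2, if_pos (hOp h2)]
        · rw [if_neg h2]
          split <;> omega
    · rw [if_neg hi, if_neg hi]

lemma ff_step_ge {j i : Fin n} (hnp : S.G.pos j i = false) (x : Fin n → ℤ) :
    S.ff (Function.update x j (x j + 1)) i ≤ S.ff x i := by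
  set y := Function.update x j (x j + 1) with hy
  by_cases harc : S.G.arc j i
  case neg =>
    have : S.ff x i = S.ff y i := by
      apply S.ff_congr
      intro z hz
      have hzj : z ≠ j := fun he => harc (by rw [← he]; exact hz)
      rw [hy, Function.update_of_ne hzj]
    omega
  case pos =>
  have hyj : y j = x j + 1 := by rw [hy, Function.update_self]
  have hyz : ∀ z, z ≠ j → y z = x z := fun z hz => Function.update_of_ne hz _ _
  have hmono : ∀ z, S.G.arc z i → S.uB z i (y z) = true → S.uB z i (x z) = true := by
    intro z hz hu
    by_cases hzj : z = j
    · subst hzj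
      rw [hyj] at hu
      exact S.u_noUp hnp hz _ hu
    · rwa [hyz z hzj] at hu
  have hOp : S.Op y i → S.Op x i := by
    rintro ⟨z, hg, hu⟩
    exact ⟨z, hg, hmono z hg.1 hu⟩
  have hAp : S.Ap y i → S.Ap x i := fun ha z hg => hmono z hg.1 (ha z hg)
  have hLp : S.inC i → S.Lp y i → S.Lp x i := by
    intro hC hl
    exact hmono _ (S.pred_arc' hC) hl
  unfold ff
  by_cases hC : S.inC i
  · rw [if_pos hC, if_pos hC]
    have hc : (if S.hasOne i then (S.Lp y i ∧ S.Op y i) else (S.Lp y i ∨ S.Op y i)) →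
        (if S.hasOne i then (S.Lp x i ∧ S.Op x i) else (S.Lp x i ∨ S.Op x i)) := by
      by_cases h1 : S.hasOne i
      · rw [if_pos h1, if_pos h1]
        rintro ⟨ha, hb⟩
        exact ⟨hLp hC ha, hOp hb⟩
      · rw [if_neg h1, if_neg h1]
        rintro (ha | hb)
        · exact Or.inl (hLp hC ha)
        · exact Or.inr (hOp hb)
    by_cases h2 : (if S.hasOne i then (S.Lp y i ∧ S.Op y i) else (S.Lp y i ∨ S.Op y i))
    · rw [if_pos h2, if_pos (hc h2)]
    · rw [if_neg h2]
      split <;> omega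
  · rw [if_neg hC, if_neg hC]
    by_cases hi : 0 < S.ind i
    · rw [if_pos hi, if_pos hi]
      have ht0 := S.tB_nonneg i
      have ht1 := S.tB_le_mb i
      cases S.vB i
      · simp only [Bool.false_eq_true, if_false]
        by_cases h2 : S.Ap y i
        · rw [if_pos h2, if_pos (hAp h2)]
        · rw [if_neg h2]
          split <;> omega
      · rw [if_pos rfl, if_pos rfl]
        by_cases h2 : S.Op y i
        · rw [if_pos h2, if_pos (hOp h2)]
        · rw [if_neg h2]
          split <;> omega
    · rw [if_neg hi, if_neg hi]

/-! ### witness states -/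

noncomputable def dbit (j i z : Fin n) : Bool :=
  if S.inC i then
    decide (S.hasOne i) && (decide (j = S.pred i) || decide (z = S.pred i))
  else !(S.vB i)

noncomputable def xW (j i : Fin n) (wv : ℤ) (z : Fin n) : ℤ :=
  if z = j then wv
  else if h : S.G.arc z i then (S.attain h (S.dbit j i z)).choose
  else S.xSt (fun _ => false) z

lemma xW_j (j i : Fin n) (wv : ℤ) : S.xW j i wv j = wv := by
  unfold xW; rw [if_pos rfl]

lemma xW_update (j i : Fin n) (wv wv' : ℤ) :
    Function.update (S.xW j i wv) j wv' = S.xW j i wv' := by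
  funext z
  by_cases hz : z = j
  · subst hz
    rw [Function.update_self, S.xW_j]
  · rw [Function.update_of_ne hz]
    unfold xW
    rw [if_neg hz, if_neg hz]

lemma xW_spec {j i z : Fin n} (hz : z ≠ j) (h : S.G.arc z i) (wv : ℤ) :
    0 ≤ S.xW j i wv z ∧ S.xW j i wv z ≤ (S.mb z : ℤ) ∧
      S.uB z i (S.xW j i wv z) = S.dbit j i z := by
  unfold xW
  rw [if_neg hz, dif_pos h]
  exact (S.attain h (S.dbit j i z)).choose_spec

lemma xW_bounds {j i : Fin n} (z : Fin n) (hz : z ≠ j) (wv : ℤ) :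
    0 ≤ S.xW j i wv z ∧ S.xW j i wv z ≤ (S.mb z : ℤ) := by
  by_cases h : S.G.arc z i
  · exact ⟨(S.xW_spec hz h wv).1, (S.xW_spec hz h wv).2.1⟩
  · unfold xW
    rw [if_neg hz, dif_neg h]
    exact S.xSt_bounds _ z

/-- the key evaluation: along the family `xW j i`, the value of `ff` at `i` is a
two-valued strictly monotone function of the `u`-bit of coordinate `j`. -/
lemma ff_xW {j i : Fin n} (harc : S.G.arc j i) :
    ∃ A B : ℤ, A < B ∧ ∀ wv : ℤ,
      S.ff (S.xW j i wv) i = (if S.uB j i wv = true then B else A) := by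
  by_cases hC : S.inC i
  · refine ⟨S.loB i, S.loB i + 1, by omega, ?_⟩
    intro wv
    unfold ff
    rw [if_pos hC]
    by_cases hjp : j = S.pred i
    · -- j is the cycle predecessor
      have hzj : ∀ z, S.gen z i → z ≠ j := by
        intro z hg he
        exact hg.2 ⟨hC, by rw [he, hjp]⟩
      have hOthers : ∀ z, S.gen z i →
          S.uB z i (S.xW j i wv z) = decide (S.hasOne i) := by
        intro z hg
        rw [(S.xW_spec (hzj z hg) hg.1 wv).2.2]
        unfold dbit
        rw [if_pos hC]
        simp [hjp]
      have hLp : S.Lp (S.xW j i wv) i ↔ S.uB j i wv = true := by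
        unfold Lp
        rw [← hjp, S.xW_j]
      have hOp : S.Op (S.xW j i wv) i ↔ S.hasOne i := by
        constructor
        · rintro ⟨z, hg, hu⟩
          rw [hOthers z hg] at hu
          simpa using hu
        · rintro ⟨z, hg, hpv⟩
          refine ⟨z, hg, ?_⟩
          rw [hOthers z hg]
          simp
          exact ⟨z, hg, hpv⟩
      have hcond : (if S.hasOne i then (S.Lp (S.xW j i wv) i ∧ S.Op (S.xW j i wv) i)
          else (S.Lp (S.xW j i wv) i ∨ S.Op (S.xW j i wv) i)) ↔ S.uB j i wv = true := by
        by_cases h1 : S.hasOne i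
        · rw [if_pos h1, hLp, hOp]
          tauto
        · rw [if_neg h1, hLp, hOp]
          tauto
      rw [if_congr hcond rfl rfl]
      by_cases hu : S.uB j i wv = true
      · rw [if_pos hu, if_pos hu]
      · rw [if_neg hu, if_neg hu]
        omega
    · -- j is a generic in-neighbour of the cycle vertex i
      have hgj : S.gen j i := ⟨harc, fun hs => hjp hs.2⟩
      have hgenu : ∀ z, S.gen z i → z ≠ j →
          S.uB z i (S.xW j i wv z) = false := by
        intro z hg hzj
        rw [(S.xW_spec hzj hg.1 wv).2.2]
        unfold dbit
        rw [if_pos hC]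
        have hzp : ¬ z = S.pred i := fun he => hg.2 ⟨hC, he⟩
        simp [hzp, hjp]
      have hLp : S.Lp (S.xW j i wv) i ↔ S.hasOne i := by
        unfold Lp
        have hpj : S.pred i ≠ j := Ne.symm hjp
        rw [(S.xW_spec hpj (S.pred_arc' hC) wv).2.2]
        unfold dbit
        rw [if_pos hC]
        by_cases h1 : S.hasOne i <;> simp [h1, hjp]
      have hOp : S.Op (S.xW j i wv) i ↔ S.uB j i wv = true := by
        constructor
        · rintro ⟨z, hg, hu⟩
          by_cases hzj : z = j
          · subst hzj
            rwa [S.xW_j] at hu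
          · rw [hgenu z hg hzj] at hu
            exact Bool.noConfusion hu
        · intro hu
          refine ⟨j, hgj, ?_⟩
          rwa [S.xW_j]
      have hcond : (if S.hasOne i then (S.Lp (S.xW j i wv) i ∧ S.Op (S.xW j i wv) i)
          else (S.Lp (S.xW j i wv) i ∨ S.Op (S.xW j i wv) i)) ↔ S.uB j i wv = true := by
        by_cases h1 : S.hasOne i
        · rw [if_pos h1, hLp, hOp]
          tauto
        · rw [if_neg h1, hLp, hOp]
          tauto
      rw [if_congr hcond rfl rfl]
      by_cases hu : S.uB j i wv = true
      · rw [if_pos hu, if_pos hu]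
      · rw [if_neg hu, if_neg hu]
        omega
  · -- i is not a cycle vertex
    have hi : 0 < S.ind i := S.arc_ind_pos harc
    have hgj : S.gen j i := S.gen_of_arc_notC hC harc
    have hgenu : ∀ (wv : ℤ) (z : Fin n), S.gen z i → z ≠ j →
        S.uB z i (S.xW j i wv z) = !(S.vB i) := by
      intro wv z hg hzj
      rw [(S.xW_spec hzj hg.1 wv).2.2]
      unfold dbit
      rw [if_neg hC]
    cases hv : S.vB i
    · -- AND form
      refine ⟨S.tB i, (S.mb i : ℤ), ?_, ?_⟩
      · have := S.noncyc_needHi hC (Or.inl ⟨hC, hi, hv⟩)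
        omega
      · intro wv
        unfold ff
        rw [if_neg hC, if_pos hi, hv]
        simp only [Bool.false_eq_true, if_false]
        have hAp : S.Ap (S.xW j i wv) i ↔ S.uB j i wv = true := by
          constructor
          · intro ha
            have := ha j hgj
            rwa [S.xW_j] at this
          · intro hu z hg
            by_cases hzj : z = j
            · subst hzj
              rwa [S.xW_j]
            · rw [hgenu wv z hg hzj, hv]
              rfl
        rw [if_congr hAp rfl rfl]
        by_cases hu : S.uB j i wv = true
        · rw [if_pos hu, if_pos hu]
          omega
        · rw [if_neg hu, if_neg hu]
          omega
    · -- OR form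
      refine ⟨0, S.tB i, ?_, ?_⟩
      · have := S.tB_pos_of_needLo (Or.inl ⟨hC, hi, hv⟩)
        omega
      · intro wv
        unfold ff
        rw [if_neg hC, if_pos hi, hv, if_pos rfl]
        have hOp : S.Op (S.xW j i wv) i ↔ S.uB j i wv = true := by
          constructor
          · rintro ⟨z, hg, hu⟩
            by_cases hzj : z = j
            · subst hzj
              rwa [S.xW_j] at hu
            · rw [hgenu wv z hg hzj, hv] at hu
              exact Bool.noConfusion hu
          · intro hu
            refine ⟨j, hgj, ?_⟩
            rwa [S.xW_j]
        rw [if_congr hOp rfl rfl]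

end Stmt5Setup
namespace Stmt5Setup

variable {n k : ℕ} (S : Stmt5Setup n k)

lemma FF_onGraph : (S.FF).onGraph S.G := by
  constructor
  · intro j i
    constructor
    · intro hp
      obtain ⟨sv, h0, h1, hu0, hu1⟩ := S.stepUp hp
      obtain ⟨A, B, hAB, hval⟩ := S.ff_xW (Or.inl hp)
      refine ⟨S.xW j i sv, ?_, ?_, ?_⟩
      · intro z
        show S.xW j i sv z ∈ S.XI z
        simp only [XI, Finset.mem_Icc]
        by_cases hz : z = j
        · subst hz
          rw [S.xW_j]
          exact ⟨h0, by omega⟩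
        · exact ⟨(S.xW_bounds z hz sv).1, (S.xW_bounds z hz sv).2⟩
      · show S.xW j i sv j + 1 ∈ S.XI j
        rw [S.xW_j]
        simp only [XI, Finset.mem_Icc]
        exact ⟨by omega, h1⟩
      · show S.ff (S.xW j i sv) i <
          S.ff (Function.update (S.xW j i sv) j (S.xW j i sv j + 1)) i
        rw [S.xW_j, S.xW_update]
        rw [hval sv, hval (sv + 1), hu1, if_pos rfl,
          if_neg (by rw [hu0]; simp)]
        exact hAB
    · rintro ⟨x, hmem, hx1, hlt⟩
      by_contra hnp
      have hnp' : S.G.pos j i = false := by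
        cases he : S.G.pos j i
        · rfl
        · exact absurd he hnp
      have hge := S.ff_step_ge hnp' x
      have hlt' : S.ff x i < S.ff (Function.update x j (x j + 1)) i := hlt
      omega
  · intro j i
    constructor
    · intro hn
      obtain ⟨sv, h0, h1, hu0, hu1⟩ := S.stepDown hn
      obtain ⟨A, B, hAB, hval⟩ := S.ff_xW (Or.inr hn)
      refine ⟨S.xW j i sv, ?_, ?_, ?_⟩
      · intro z
        show S.xW j i sv z ∈ S.XI z
        simp only [XI, Finset.mem_Icc]
        by_cases hz : z = j
        · subst hz
          rw [S.xW_j]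
          exact ⟨h0, by omega⟩
        · exact ⟨(S.xW_bounds z hz sv).1, (S.xW_bounds z hz sv).2⟩
      · show S.xW j i sv j + 1 ∈ S.XI j
        rw [S.xW_j]
        simp only [XI, Finset.mem_Icc]
        exact ⟨by omega, h1⟩
      · show S.ff (Function.update (S.xW j i sv) j (S.xW j i sv j + 1)) i <
          S.ff (S.xW j i sv) i
        rw [S.xW_j, S.xW_update]
        rw [hval sv, hval (sv + 1), hu0, if_pos rfl,
          if_neg (by rw [hu1]; simp)]
        exact hAB
    · rintro ⟨x, hmem, hx1, hlt⟩
      by_contra hnn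
      have hnn' : S.G.neg j i = false := by
        cases he : S.G.neg j i
        · rfl
        · exact absurd he hnn
      have hle := S.ff_step_le hnn' x
      have hlt' : S.ff (Function.update x j (x j + 1)) i < S.ff x i := hlt
      omega

end Stmt5Setup
/-- If `G` is connected and contains `k ≥ 1` pairwise vertex-disjoint
positive cycles, then some degree-bounded FDS on `G` has at least `2^k` fixed points. -/
theorem stmt5 (n k : ℕ) (hk : 1 ≤ k) (G : SDigraph (Fin n)) (hconn : SDigraph.Connected G)
    (m : Fin k → ℕ) (v : ∀ l, Fin (m l + 1) → Fin n) (s : ∀ l, Fin (m l + 1) → Bool)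
    (hcyc : ∀ l, SDigraph.IsSignedCycleOn G (m l) (v l) (s l))
    (hpos : ∀ l, SDigraph.negCount (s l) % 2 = 0)
    (hdisj : ∀ l l', l ≠ l' → ∀ t t', v l t ≠ v l' t') :
    ∃ F : FDS (Fin n), F.onGraph G ∧ F.degreeBounded G ∧
      ∃ S : Finset (Fin n → ℤ), 2 ^ k ≤ S.card ∧ ∀ x ∈ S, F.IsFixed x := by
  let S : Stmt5Setup n k := ⟨G, hk, m, v, s, hconn, hcyc, hpos, hdisj⟩
  refine ⟨S.FF, S.FF_onGraph, S.FF_degreeBounded,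
    (Finset.univ : Finset (Fin k → Bool)).image S.xSt, ?_, ?_⟩
  · rw [Finset.card_image_of_injective _ S.xSt_inj, Finset.card_univ]
    simp
  · intro x hx
    simp only [Finset.mem_image] at hx
    obtain ⟨β, _, rfl⟩ := hx
    constructor
    · intro i
      show S.xSt β i ∈ S.XI i
      simp only [Stmt5Setup.XI, Finset.mem_Icc]
      exact ⟨(S.xSt_bounds β i).1, (S.xSt_bounds β i).2⟩
    · funext i
      exact S.ff_fixed β i
end
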